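/- arXiv:1804.08353 — 5 statements merged into one kernel-verified Lean document; each statement's English description precedes it below -/
import Mathlib

section
/- Let X be a countable set and m : X → ℝ with m(x) > 0 for all x and finite total mass m(X). Let S > 0, α ≥ 0, o ∈ X, k ≥ 1, and let φ_1, …, φ_k : X → ℝ be orthonormal in ℓ²(X,m). Let λ_1 ≤ λ_2 ≤ … ≤ λ_k be real numbers with λ_1 ≥ 0 such that for every choice of reals β_1, …, β_k, the function φ = ∑_{j=1}^k β_j φ_j satisfies ‖φ‖_∞² ≤ S(∑_{j=1}^k λ_j β_j² + α φ(o)²). Then λ_k ≥ k/(S · m(X)) − α/m(o). (This is the eigenvalue bound of Theorem 'spectral_bound_lin' applied to the first k eigenvalues and an orthonormal family of corresponding eigenfunctions of the generator of a Dirichlet form satisfying an ℓ^∞_{α,o}-Sobolev inequality with constant S.) -/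
/-- Theorem `spectral_bound_lin`, applied to the first `k` eigenvalues
and an orthonormal family of corresponding eigenfunctions.
`X` is a countable set, `m` a finite measure of full support on `X`. Given `o ∈ X`,
functions `φ₁, …, φ_k` orthonormal in `ℓ²(X,m)` and reals `0 ≤ λ₁ ≤ … ≤ λ_k` such that
every linear combination `φ = ∑ βⱼ φⱼ` satisfies the Sobolev-type bound
`‖φ‖_∞² ≤ S (∑ λⱼ βⱼ² + α |φ(o)|²)`, one has `λ_k ≥ k/(S·m(X)) − α/m(o)`. -/
theorem spectral_bound_lin
    {X : Type*} [Countable X] (m : X → ℝ)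
    (hm_pos : ∀ x, 0 < m x) (hm_fin : Summable m)
    (S α : ℝ) (hS : 0 < S) (hα : 0 ≤ α)
    (o : X) (k : ℕ) (hk : 0 < k)
    (φ : Fin k → X → ℝ)
    (hφ_sum : ∀ i j, Summable (fun y => φ i y * φ j y * m y))
    (hφ_orth : ∀ i j, (∑' y, φ i y * φ j y * m y) = if i = j then (1 : ℝ) else 0)
    (lam : Fin k → ℝ) (hlam_mono : Monotone lam) (hlam_nonneg : 0 ≤ lam ⟨0, hk⟩)
    (hsobolev : ∀ β : Fin k → ℝ, ∀ y : X,
      (∑ j, β j * φ j y) ^ 2 ≤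
        S * ((∑ j, lam j * β j ^ 2) + α * (∑ j, β j * φ j o) ^ 2)) :
    lam ⟨k - 1, Nat.sub_lt hk Nat.one_pos⟩ ≥ (k : ℝ) / (S * ∑' x, m x) - α / m o := by
  set T : ℝ := ∑' x, m x with hTdef
  have hT_pos : 0 < T := Summable.tsum_pos hm_fin (fun x => (hm_pos x).le) o (hm_pos o)
  set L : ℝ := lam ⟨k - 1, Nat.sub_lt hk Nat.one_pos⟩ with hLdef
  have hL_top : ∀ j : Fin k, lam j ≤ L := by
    intro j
    apply hlam_mono
    rw [Fin.le_def]
    exact Nat.le_sub_one_of_lt j.isLt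
  have hL0 : 0 ≤ L := le_trans hlam_nonneg (hL_top ⟨0, hk⟩)
  set e : X → ℝ := fun y => ∑ j, φ j y ^ 2 with hedef
  have he_nonneg : ∀ y, 0 ≤ e y := fun y => Finset.sum_nonneg fun j _ => sq_nonneg _
  have hem_eq : ∀ y, e y * m y = ∑ j, φ j y * φ j y * m y := by
    intro y
    rw [hedef]
    rw [Finset.sum_mul]
    exact Finset.sum_congr rfl fun j _ => by ring
  have hsum_em : Summable (fun y => e y * m y) := by
    simp_rw [hem_eq]
    exact summable_sum fun j _ => hφ_sum j j
  have hK : (∑' y, e y * m y) = (k : ℝ) := by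
    calc (∑' y, e y * m y) = ∑' y, ∑ j, φ j y * φ j y * m y := by simp_rw [hem_eq]
      _ = ∑ j, ∑' y, φ j y * φ j y * m y := Summable.tsum_finsetSum fun j _ => hφ_sum j j
      _ = ∑ _j : Fin k, (1 : ℝ) := by
            apply Finset.sum_congr rfl
            intro j _
            rw [hφ_orth j j]
            simp
      _ = (k : ℝ) := by simp
  set c : X → ℝ := fun y => ∑ j, φ j y * φ j o with hcdef
  have hc2m_eq : ∀ y, c y ^ 2 * m y
      = ∑ i, ∑ j, (φ i y * φ j y * m y) * (φ i o * φ j o) := by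
    intro y
    rw [hcdef, sq, Finset.sum_mul_sum, Finset.sum_mul]
    refine Finset.sum_congr rfl fun i _ => ?_
    rw [Finset.sum_mul]
    refine Finset.sum_congr rfl fun j _ => ?_
    ring
  have hsum_c2m : Summable (fun y => c y ^ 2 * m y) := by
    simp_rw [hc2m_eq]
    exact summable_sum fun i _ => summable_sum fun j _ => (hφ_sum i j).mul_right _
  have hco : (∑' y, c y ^ 2 * m y) = e o := by
    calc (∑' y, c y ^ 2 * m y)
        = ∑' y, ∑ i, ∑ j, (φ i y * φ j y * m y) * (φ i o * φ j o) := by simp_rw [hc2m_eq]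
      _ = ∑ i, ∑' y, ∑ j, (φ i y * φ j y * m y) * (φ i o * φ j o) :=
          Summable.tsum_finsetSum fun i _ => summable_sum fun j _ => (hφ_sum i j).mul_right _
      _ = ∑ i, ∑ j, ∑' y, (φ i y * φ j y * m y) * (φ i o * φ j o) :=
          Finset.sum_congr rfl fun i _ => Summable.tsum_finsetSum fun j _ => (hφ_sum i j).mul_right _
      _ = ∑ i, ∑ j, (if i = j then (1:ℝ) else 0) * (φ i o * φ j o) := by
          refine Finset.sum_congr rfl fun i _ => Finset.sum_congr rfl fun j _ => ?_
          rw [tsum_mul_right, hφ_orth i j]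
      _ = e o := by
          rw [hedef]
          simp [Finset.sum_ite_eq, sq]
  -- pointwise Sobolev consequence
  have hpt : ∀ y, e y ^ 2 ≤ S * (L * e y + α * c y ^ 2) := by
    intro y
    have h := hsobolev (fun j => φ j y) y
    have h1 : (∑ j, φ j y * φ j y) = e y := by
      rw [hedef]
      exact Finset.sum_congr rfl fun j _ => (sq (φ j y)).symm
    have h2 : (∑ j, lam j * φ j y ^ 2) ≤ L * e y := by
      rw [hedef, Finset.mul_sum]
      exact Finset.sum_le_sum fun j _ => mul_le_mul_of_nonneg_right (hL_top j) (sq_nonneg _)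
    rw [h1] at h
    have h3 : S * ((∑ j, lam j * φ j y ^ 2) + α * (∑ j, φ j y * φ j o) ^ 2)
        ≤ S * (L * e y + α * c y ^ 2) := by
      apply mul_le_mul_of_nonneg_left _ hS.le
      rw [hcdef]
      linarith
    exact h.trans h3
  have hptm : ∀ y, e y ^ 2 * m y ≤ S * (L * (e y * m y) + α * (c y ^ 2 * m y)) := by
    intro y
    calc e y ^ 2 * m y ≤ (S * (L * e y + α * c y ^ 2)) * m y :=
          mul_le_mul_of_nonneg_right (hpt y) (hm_pos y).le
      _ = S * (L * (e y * m y) + α * (c y ^ 2 * m y)) := by ring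
  have hsumQbd : Summable (fun y => S * (L * (e y * m y) + α * (c y ^ 2 * m y))) :=
    (((hsum_em.mul_left L).add (hsum_c2m.mul_left α)).mul_left S)
  have hQsum : Summable (fun y => e y ^ 2 * m y) :=
    Summable.of_nonneg_of_le (fun y => mul_nonneg (sq_nonneg _) (hm_pos y).le) hptm hsumQbd
  set Q : ℝ := ∑' y, e y ^ 2 * m y with hQdef
  have hQle : Q ≤ S * (L * k + α * e o) := by
    calc Q ≤ ∑' y, S * (L * (e y * m y) + α * (c y ^ 2 * m y)) :=
          Summable.tsum_le_tsum hptm hQsum hsumQbd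
      _ = S * (L * (∑' y, e y * m y) + α * (∑' y, c y ^ 2 * m y)) := by
          rw [tsum_mul_left, Summable.tsum_add (hsum_em.mul_left L) (hsum_c2m.mul_left α),
            tsum_mul_left, tsum_mul_left]
      _ = S * (L * k + α * e o) := by rw [hK, hco]
  -- variance trick: k^2 ≤ T * Q
  have hvar : (k : ℝ) ^ 2 ≤ T * Q := by
    set u : ℝ := (k : ℝ) / T with hudef
    have h0 : (0:ℝ) ≤ ∑' y, (e y - u) ^ 2 * m y :=
      tsum_nonneg fun y => mul_nonneg (sq_nonneg _) (hm_pos y).le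
    have hexp : ∀ y, (e y - u) ^ 2 * m y
        = e y ^ 2 * m y - (2 * u) * (e y * m y) + u ^ 2 * m y := fun y => by ring
    have hs1 : Summable (fun y => e y ^ 2 * m y - (2 * u) * (e y * m y)) :=
      hQsum.sub (hsum_em.mul_left _)
    have hsumval : (∑' y, (e y - u) ^ 2 * m y)
        = Q - 2 * u * k + u ^ 2 * T := by
      simp_rw [hexp]
      rw [Summable.tsum_add hs1 (hm_fin.mul_left _), Summable.tsum_sub hQsum (hsum_em.mul_left _),
        tsum_mul_left, tsum_mul_left, hK]
    rw [hsumval] at h0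
    have hu : u * T = (k : ℝ) := div_mul_cancel₀ _ hT_pos.ne'
    nlinarith [mul_nonneg h0 hT_pos.le]
  -- e o * m o ≤ k
  have heo : e o ≤ (k : ℝ) / m o := by
    rw [le_div_iff₀ (hm_pos o)]
    have h := Summable.le_tsum hsum_em o (fun y _ => mul_nonneg (he_nonneg y) (hm_pos y).le)
    rw [hK] at h
    exact h
  have hK_pos : (0:ℝ) < k := by exact_mod_cast hk
  have hQle' : Q ≤ S * (L * k + α * ((k:ℝ) / m o)) := by
    have := mul_le_mul_of_nonneg_left heo hα
    nlinarith
  have h4 : (k:ℝ) ^ 2 ≤ T * (S * (L * k + α * ((k:ℝ) / m o))) :=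
    hvar.trans (mul_le_mul_of_nonneg_left hQle' hT_pos.le)
  have h6 : T * (S * (L * (k:ℝ) + α * ((k:ℝ) / m o))) = (T * (S * (L + α / m o))) * k := by
    field_simp
  have h5 : (k : ℝ) ≤ T * (S * (L + α / m o)) := by
    apply le_of_mul_le_mul_right _ hK_pos
    calc (k:ℝ) * k = (k:ℝ) ^ 2 := by ring
      _ ≤ T * (S * (L * k + α * ((k:ℝ) / m o))) := h4
      _ = (T * (S * (L + α / m o))) * k := h6
  rw [ge_iff_le, sub_le_iff_le_add, div_le_iff₀ (mul_pos hS hT_pos)]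
  calc (k : ℝ) ≤ T * (S * (L + α / m o)) := h5
    _ = (L + α / m o) * (S * T) := by ring
end

section
/- Let X be a countable set and m : X → ℝ with m(x) > 0 for all x and finite total mass m(X). Let S > 0, α ≥ 0, o ∈ X, k ≥ 1, and let φ_1, …, φ_k : X → ℝ be orthonormal in ℓ²(X,m). Let λ_1 ≤ λ_2 ≤ … ≤ λ_k be real numbers with λ_1 ≥ 0 such that for every choice of reals β_1, …, β_k, the function φ = ∑_{j=1}^k β_j φ_j satisfies ‖φ‖_∞² ≤ S(∑_{j=1}^k λ_j β_j² + α φ(o)²). Then for every x ∈ X one has the pointwise Bessel-type bound ∑_{j=1}^k φ_j(x)² ≤ S(λ_k + α/m(o)). (Intermediate claim in the proof of Theorem 'spectral_bound_lin'.) -/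
/-- Auxiliary: for any coefficient vector `β`, the weighted `ℓ²` norm of
`y ↦ ∑ j, β j * φ j y` equals `∑ j, β j ^ 2`, and moreover the single term at `o`
is at most the total sum. -/
theorem pointwise_bessel_aux
    {X : Type*} [Countable X] (m : X → ℝ)
    (hm_pos : ∀ x, 0 < m x)
    (k : ℕ) (φ : Fin k → X → ℝ)
    (hφ_sum : ∀ i j, Summable (fun y => φ i y * φ j y * m y))
    (hφ_orth : ∀ i j, (∑' y, φ i y * φ j y * m y) = if i = j then (1 : ℝ) else 0)
    (β : Fin k → ℝ) (o : X) :
    (∑ j, β j * φ j o) ^ 2 * m o ≤ ∑ j, β j ^ 2 := by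
  set f : X → ℝ := fun y => (∑ j, β j * φ j y) ^ 2 * m y with hf
  have hexp : ∀ y, f y = ∑ i, ∑ j, β i * β j * (φ i y * φ j y * m y) := by
    intro y
    simp only [hf, sq, Finset.sum_mul_sum, Finset.sum_mul]
    refine Finset.sum_congr rfl fun i _ => ?_
    rw [Finset.mul_sum, Finset.sum_mul]
    exact Finset.sum_congr rfl fun j _ => by ring
  have hsumm : Summable f := by
    rw [show f = fun y => ∑ i, ∑ j, β i * β j * (φ i y * φ j y * m y) from funext hexp]
    exact summable_sum fun i _ => summable_sum fun j _ => (hφ_sum i j).mul_left _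
  have htsum : (∑' y, f y) = ∑ j, β j ^ 2 := by
    calc (∑' y, f y) = ∑' y, ∑ i, ∑ j, β i * β j * (φ i y * φ j y * m y) := by
          exact tsum_congr hexp
      _ = ∑ i, ∑ j, β i * β j * (∑' y, φ i y * φ j y * m y) := by
          rw [Summable.tsum_finsetSum fun i _ => summable_sum fun j _ => (hφ_sum i j).mul_left _]
          refine Finset.sum_congr rfl fun i _ => ?_
          rw [Summable.tsum_finsetSum fun j _ => (hφ_sum i j).mul_left _]
          exact Finset.sum_congr rfl fun j _ => tsum_mul_left
      _ = ∑ j, β j ^ 2 := by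
          simp only [hφ_orth, mul_ite, mul_one, mul_zero]
          rw [Finset.sum_comm]
          refine Finset.sum_congr rfl fun j _ => ?_
          simp [Finset.sum_ite_eq', sq]
  have hle : f o ≤ ∑' y, f y :=
    Summable.le_tsum hsumm o fun y _ => mul_nonneg (sq_nonneg _) (hm_pos y).le
  rw [htsum] at hle
  exact hle

/-- pointwise Bessel-type bound: intermediate claim in the proof of
Theorem `spectral_bound_lin`.
Under the same hypotheses as in Statement 1, for every `x ∈ X` one has
`∑_{j=1}^k φⱼ(x)² ≤ S (λ_k + α/m(o))`. -/
theorem pointwise_bessel_bound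
    {X : Type*} [Countable X] (m : X → ℝ)
    (hm_pos : ∀ x, 0 < m x) (hm_fin : Summable m)
    (S α : ℝ) (hS : 0 < S) (hα : 0 ≤ α)
    (o : X) (k : ℕ) (hk : 0 < k)
    (φ : Fin k → X → ℝ)
    (hφ_sum : ∀ i j, Summable (fun y => φ i y * φ j y * m y))
    (hφ_orth : ∀ i j, (∑' y, φ i y * φ j y * m y) = if i = j then (1 : ℝ) else 0)
    (lam : Fin k → ℝ) (hlam_mono : Monotone lam) (hlam_nonneg : 0 ≤ lam ⟨0, hk⟩)
    (hsobolev : ∀ β : Fin k → ℝ, ∀ y : X,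
      (∑ j, β j * φ j y) ^ 2 ≤
        S * ((∑ j, lam j * β j ^ 2) + α * (∑ j, β j * φ j o) ^ 2)) :
    ∀ x : X, (∑ j, φ j x ^ 2) ≤
      S * (lam ⟨k - 1, Nat.sub_lt hk Nat.one_pos⟩ + α / m o) := by
  intro x
  set last : Fin k := ⟨k - 1, Nat.sub_lt hk Nat.one_pos⟩ with hlast
  set T : ℝ := ∑ j, φ j x ^ 2 with hT
  have hT_nonneg : 0 ≤ T := Finset.sum_nonneg fun j _ => sq_nonneg _
  have hlam_last_nonneg : 0 ≤ lam last :=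
    hlam_nonneg.trans (hlam_mono (by simp [hlast]))
  have hmo : 0 < m o := hm_pos o
  set β : Fin k → ℝ := fun j => φ j x with hβ
  have hsum_x : (∑ j, β j * φ j x) = T := by
    simp [hβ, hT, sq]
  have hP : (∑ j, β j * φ j o) ^ 2 * m o ≤ T := by
    have := pointwise_bessel_aux m hm_pos k φ hφ_sum hφ_orth β o
    simpa [hβ, hT, sq] using this
  have hP' : (∑ j, β j * φ j o) ^ 2 ≤ T / m o := by
    rw [le_div_iff₀ hmo]; exact hP
  have hlam_bound : (∑ j, lam j * β j ^ 2) ≤ lam last * T := by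
    rw [hT, Finset.mul_sum]
    refine Finset.sum_le_sum fun j _ => ?_
    have hjle : j ≤ last := by
      have := j.isLt
      exact Fin.mk_le_mk.mpr (by omega)
    show lam j * β j ^ 2 ≤ lam last * β j ^ 2
    exact mul_le_mul_of_nonneg_right (hlam_mono hjle) (sq_nonneg _)
  have hkey := hsobolev β x
  rw [hsum_x] at hkey
  have hkey2 : T ^ 2 ≤ S * (lam last * T + α * (T / m o)) := by
    refine hkey.trans ?_
    apply mul_le_mul_of_nonneg_left _ hS.le
    exact add_le_add hlam_bound (mul_le_mul_of_nonneg_left hP' hα)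
  rcases eq_or_lt_of_le hT_nonneg with h0 | hpos
  · rw [← h0]
    positivity
  · have : T ^ 2 ≤ S * (lam last + α / m o) * T := by
      calc T ^ 2 ≤ S * (lam last * T + α * (T / m o)) := hkey2
        _ = S * (lam last + α / m o) * T := by ring
    nlinarith
end

section
/- Let X be a countable set and m : X → ℝ with m(x) > 0 for all x and finite total mass m(X). Let p ∈ (2,∞) and S > 0. Let (φ_i)_{i∈ℕ} : X → ℝ be orthonormal in ℓ²(X,m) and let 0 ≤ λ_1 ≤ λ_2 ≤ … be nondecreasing nonnegative reals such that: (i) for every t > 0 and x ∈ X the series ∑_i e^{−tλ_i} φ_i(x)² converges; define p_t(x,y) = ∑_i e^{−tλ_i} φ_i(x) φ_i(y); (ii) p_t(x,y) ≥ 0 and ∑_{y∈X} p_t(x,y) m(y) ≤ 1 for all t > 0 and x ∈ X; (iii) for all t > 0 and x ∈ X, (∑_{y∈X} p_t(x,y)^p m(y))^{2/p} ≤ S · ∑_i λ_i e^{−2tλ_i} φ_i(x)², the right-hand side series being convergent. Then for every k ≥ 1: (1/k)∑_{i=1}^k λ_i ≥ (1/(eS)) · (k/m(X))^{1−2/p},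 and in particular λ_k ≥ (1/(eS)) · (k/m(X))^{1−2/p}. (Eigenvalue lower bound of Theorem 'thm:pSobolev', stated via the eigenfunction expansion of the heat kernel of the generator of a Dirichlet form satisfying the ℓ^p-Sobolev inequality with constant S.) -/
open scoped ENNReal BigOperators

/-- From an `ℝ≥0∞` bound on a `tsum` of `ofReal`s of nonneg reals, get summability and a
real bound. -/
lemma aux_ofReal_tsum {X : Type*} {f : X → ℝ} (hf : ∀ y, 0 ≤ f y)
    (hne : ∑' y, ENNReal.ofReal (f y) ≠ ⊤) :
    Summable f ∧ ENNReal.ofReal (∑' y, f y) = ∑' y, ENNReal.ofReal (f y) := by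
  have hs : Summable f := by
    have := ENNReal.summable_toReal hne
    simpa [ENNReal.toReal_ofReal, hf] using this
  refine ⟨hs, ?_⟩
  rw [ENNReal.ofReal_tsum_of_nonneg hf hs]

/-- Cauchy–Schwarz for weighted tsums. -/
lemma aux_cs {X : Type*} {u v w : X → ℝ} (hw : ∀ y, 0 ≤ w y)
    (hu : Summable (fun y => u y ^ 2 * w y)) (hv : Summable (fun y => v y ^ 2 * w y)) :
    Summable (fun y => u y * v y * w y) ∧
      |∑' y, u y * v y * w y| ≤
        (∑' y, u y ^ 2 * w y) ^ ((1:ℝ)/2) * (∑' y, v y ^ 2 * w y) ^ ((1:ℝ)/2) := by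
  have h22 : (2:ℝ).HolderConjugate 2 := Real.HolderConjugate.two_two
  set f := fun y => |u y| * Real.sqrt (w y) with hf
  set g := fun y => |v y| * Real.sqrt (w y) with hg
  have hf0 : ∀ y, 0 ≤ f y := fun y => mul_nonneg (abs_nonneg _) (Real.sqrt_nonneg _)
  have hg0 : ∀ y, 0 ≤ g y := fun y => mul_nonneg (abs_nonneg _) (Real.sqrt_nonneg _)
  have hfsq : ∀ y, f y ^ (2:ℝ) = u y ^ 2 * w y := by
    intro y
    rw [show ((2:ℝ) = ((2:ℕ):ℝ)) by norm_num, Real.rpow_natCast]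
    rw [mul_pow, sq_abs, Real.sq_sqrt (hw y)]
  have hgsq : ∀ y, g y ^ (2:ℝ) = v y ^ 2 * w y := by
    intro y
    rw [show ((2:ℝ) = ((2:ℕ):ℝ)) by norm_num, Real.rpow_natCast]
    rw [mul_pow, sq_abs, Real.sq_sqrt (hw y)]
  have hufs : Summable (fun y => f y ^ (2:ℝ)) := by simpa [hfsq] using hu
  have hvgs : Summable (fun y => g y ^ (2:ℝ)) := by simpa [hgsq] using hv
  obtain ⟨hsum, hle⟩ := Real.summable_and_inner_le_Lp_mul_Lq_tsum_of_nonneg h22 hf0 hg0 hufs hvgs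
  have hfg : ∀ y, f y * g y = |u y * v y * w y| := by
    intro y
    rw [abs_mul, abs_mul, abs_of_nonneg (hw y)]
    have : Real.sqrt (w y) * Real.sqrt (w y) = w y := Real.mul_self_sqrt (hw y)
    rw [← this]; ring
  have habs : Summable (fun y => |u y * v y * w y|) := by simpa [hfg] using hsum
  refine ⟨habs.of_abs, ?_⟩
  have hnorm : Summable (fun y => ‖u y * v y * w y‖) := by
    simpa only [Real.norm_eq_abs] using habs
  have h1 : |∑' y, u y * v y * w y| ≤ ∑' y, |u y * v y * w y| := by
    simpa only [Real.norm_eq_abs] using norm_tsum_le_tsum_norm hnorm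
  have h2 : ∑' y, |u y * v y * w y| = ∑' y, f y * g y := by
    exact tsum_congr fun y => (hfg y).symm
  have h3 : ∑' y, f y * g y ≤
      (∑' y, u y ^ 2 * w y) ^ ((1:ℝ)/2) * (∑' y, v y ^ 2 * w y) ^ ((1:ℝ)/2) := by
    have e1 : ∑' y, f y ^ (2:ℝ) = ∑' y, u y ^ 2 * w y := tsum_congr hfsq
    have e2 : ∑' y, g y ^ (2:ℝ) = ∑' y, v y ^ 2 * w y := tsum_congr hgsq
    rw [← e1, ← e2]; exact hle
  linarith

/-- Finite-rank Parseval: the weighted ℓ² norm of a finite combination of orthonormal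
functions. -/
lemma aux_parseval {X : Type*} (m : X → ℝ) (φ : ℕ → X → ℝ)
    (hφ_sum : ∀ i j, Summable (fun x => φ i x * φ j x * m x))
    (hφ_orth : ∀ i j, (∑' x, φ i x * φ j x * m x) = if i = j then (1 : ℝ) else 0)
    (c : ℕ → ℝ) (F : Finset ℕ) :
    Summable (fun y => (∑ j ∈ F, c j * φ j y) ^ 2 * m y) ∧
      ∑' y, (∑ j ∈ F, c j * φ j y) ^ 2 * m y = ∑ j ∈ F, (c j) ^ 2 := by
  have hpt : ∀ y, (∑ j ∈ F, c j * φ j y) ^ 2 * m y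
      = ∑ j ∈ F, ∑ l ∈ F, (c j * c l) * (φ j y * φ l y * m y) := by
    intro y
    rw [sq, Finset.sum_mul_sum, Finset.sum_mul]
    refine Finset.sum_congr rfl fun j _ => ?_
    rw [Finset.sum_mul]
    exact Finset.sum_congr rfl fun l _ => by ring
  have hsum_inner : ∀ j ∈ F, ∀ l ∈ F,
      Summable (fun y => (c j * c l) * (φ j y * φ l y * m y)) := by
    intro j _ l _; exact (hφ_sum j l).mul_left _
  have hsummable : Summable (fun y => (∑ j ∈ F, c j * φ j y) ^ 2 * m y) := by
    have : Summable (fun y => ∑ j ∈ F, ∑ l ∈ F, (c j * c l) * (φ j y * φ l y * m y)) := by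
      refine summable_sum fun j hj => summable_sum fun l hl => hsum_inner j hj l hl
    exact this.congr fun y => (hpt y).symm
  refine ⟨hsummable, ?_⟩
  calc ∑' y, (∑ j ∈ F, c j * φ j y) ^ 2 * m y
      = ∑' y, ∑ j ∈ F, ∑ l ∈ F, (c j * c l) * (φ j y * φ l y * m y) := tsum_congr hpt
    _ = ∑ j ∈ F, ∑ l ∈ F, (c j * c l) * ∑' y, (φ j y * φ l y * m y) := by
        rw [Summable.tsum_finsetSum (fun j hj => summable_sum (fun l hl => hsum_inner j hj l hl))]
        refine Finset.sum_congr rfl fun j hj => ?_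
        rw [Summable.tsum_finsetSum (fun l hl => hsum_inner j hj l hl)]
        exact Finset.sum_congr rfl fun l hl => tsum_mul_left
    _ = ∑ j ∈ F, (c j) ^ 2 := by
        refine Finset.sum_congr rfl fun j hj => ?_
        have h : ∀ l, (c j * c l) * ∑' y, (φ j y * φ l y * m y)
            = if j = l then c j ^ 2 else 0 := by
          intro l; rw [hφ_orth j l]
          by_cases h : j = l <;> simp [h, sq]
        simp_rw [h]
        simp [Finset.sum_ite_eq, hj]

/-- Interpolation: `‖f‖₂² ≤ ‖f‖ₚ^{p/(p-1)} ‖f‖₁^{(p-2)/(p-1)}` with `‖f‖₁ ≤ 1`. -/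
lemma aux_interp {X : Type*} {f mm : X → ℝ} {p : ℝ} (hp : 2 < p)
    (hf0 : ∀ y, 0 ≤ f y) (hm0 : ∀ y, 0 ≤ mm y)
    (hA : Summable (fun y => f y ^ p * mm y))
    (hB : Summable (fun y => f y * mm y))
    (hB1 : ∑' y, f y * mm y ≤ 1) :
    Summable (fun y => f y ^ 2 * mm y) ∧
      ∑' y, f y ^ 2 * mm y ≤ (∑' y, f y ^ p * mm y) ^ ((1:ℝ)/(p-1)) := by
  set r := p - 1 with hrdef
  have hr1 : 1 < r := by simp only [hrdef]; linarith
  have hr0 : r ≠ 0 := by positivity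
  have hrq := Real.HolderConjugate.conjExponent hr1
  set q := Real.conjExponent r with hqdef
  have hq0 : 0 < q := hrq.symm.pos
  have hinv : 1/r + 1/q = 1 := by
    have := hrq.inv_add_inv_eq_inv
    simpa [one_div] using this
  set f1 := fun y => (f y ^ p * mm y) ^ ((1:ℝ)/r) with hf1
  set g1 := fun y => (f y * mm y) ^ ((1:ℝ)/q) with hg1
  have hf10 : ∀ y, 0 ≤ f1 y := fun y => Real.rpow_nonneg
    (mul_nonneg (Real.rpow_nonneg (hf0 y) _) (hm0 y)) _
  have hg10 : ∀ y, 0 ≤ g1 y := fun y => Real.rpow_nonneg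
    (mul_nonneg (hf0 y) (hm0 y)) _
  have hf1r : ∀ y, f1 y ^ r = f y ^ p * mm y := by
    intro y
    rw [hf1, ← Real.rpow_mul (mul_nonneg (Real.rpow_nonneg (hf0 y) _) (hm0 y)),
      one_div, inv_mul_cancel₀ hr0, Real.rpow_one]
  have hg1q : ∀ y, g1 y ^ q = f y * mm y := by
    intro y
    rw [hg1, ← Real.rpow_mul (mul_nonneg (hf0 y) (hm0 y)),
      one_div, inv_mul_cancel₀ (ne_of_gt hq0), Real.rpow_one]
  have hq_val : 1/q = (r-1)/r := by
    rw [hqdef, Real.conjExponent]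
    field_simp
  have hfg : ∀ y, f1 y * g1 y = f y ^ 2 * mm y := by
    intro y
    show (f y ^ p * mm y) ^ ((1:ℝ)/r) * (f y * mm y) ^ ((1:ℝ)/q) = f y ^ 2 * mm y
    rw [Real.mul_rpow (Real.rpow_nonneg (hf0 y) _) (hm0 y),
      Real.mul_rpow (hf0 y) (hm0 y), ← Real.rpow_mul (hf0 y)]
    have hexp : p * (1/r) + 1/q = 2 := by
      rw [hq_val, hrdef]
      rw [mul_one_div, ← add_div, div_eq_iff (show p - 1 ≠ 0 by linarith)]
      ring
    calc f y ^ (p * (1/r)) * mm y ^ ((1:ℝ)/r) * (f y ^ ((1:ℝ)/q) * mm y ^ ((1:ℝ)/q))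
        = (f y ^ (p * (1/r)) * f y ^ ((1:ℝ)/q)) * (mm y ^ ((1:ℝ)/r) * mm y ^ ((1:ℝ)/q)) := by
          ring
      _ = f y ^ (p * (1/r) + 1/q) * mm y ^ ((1:ℝ)/r + 1/q) := by
          rw [← Real.rpow_add' (hf0 y) (by rw [hexp]; norm_num),
            ← Real.rpow_add' (hm0 y) (by rw [hinv]; norm_num)]
      _ = f y ^ 2 * mm y := by
          rw [hexp, hinv, Real.rpow_one,
            show ((2:ℝ) = ((2:ℕ):ℝ)) by norm_num, Real.rpow_natCast]
  have hAs : Summable (fun y => f1 y ^ r) := by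
    exact hA.congr fun y => (hf1r y).symm
  have hBs : Summable (fun y => g1 y ^ q) := by
    exact hB.congr fun y => (hg1q y).symm
  obtain ⟨hsum, hle⟩ := Real.summable_and_inner_le_Lp_mul_Lq_tsum_of_nonneg hrq hf10 hg10 hAs hBs
  have hsum2 : Summable (fun y => f y ^ 2 * mm y) := hsum.congr hfg
  refine ⟨hsum2, ?_⟩
  have e0 : ∑' y, f y ^ 2 * mm y = ∑' y, f1 y * g1 y := tsum_congr fun y => (hfg y).symm
  have e1 : ∑' y, f1 y ^ r = ∑' y, f y ^ p * mm y := tsum_congr hf1r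
  have e2 : ∑' y, g1 y ^ q = ∑' y, f y * mm y := tsum_congr hg1q
  rw [e0]
  rw [e1, e2] at hle
  have hBexp : (∑' y, f y * mm y) ^ ((1:ℝ)/q) ≤ 1 := by
    apply Real.rpow_le_one (tsum_nonneg fun y => mul_nonneg (hf0 y) (hm0 y)) hB1
    positivity
  have hAexp : 0 ≤ (∑' y, f y ^ p * mm y) ^ ((1:ℝ)/r) :=
    Real.rpow_nonneg (tsum_nonneg fun y =>
      mul_nonneg (Real.rpow_nonneg (hf0 y) _) (hm0 y)) _
  calc ∑' y, f1 y * g1 y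
      ≤ (∑' y, f y ^ p * mm y) ^ ((1:ℝ)/r) * (∑' y, f y * mm y) ^ ((1:ℝ)/q) := hle
    _ ≤ (∑' y, f y ^ p * mm y) ^ ((1:ℝ)/r) * 1 := by
        apply mul_le_mul_of_nonneg_left hBexp hAexp
    _ = (∑' y, f y ^ p * mm y) ^ ((1:ℝ)/(p-1)) := by rw [mul_one, hrdef]

/-- Integrating the differential inequality `W^θ ≤ S·L`, `W' = -2L`. -/
lemma aux_ode {W L : ℝ → ℝ} {θ S : ℝ} (hθ : 1 < θ) (hS : 0 < S)
    (hW : ∀ τ, 0 < τ → HasDerivAt W (-(2 * L τ)) τ)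
    (hWpos : ∀ τ, 0 < τ → 0 < W τ)
    (hkey : ∀ τ, 0 < τ → W τ ^ θ ≤ S * L τ)
    {t : ℝ} (ht : 0 < t) :
    W t ≤ (2 * (θ - 1) / S * t) ^ (-(1/(θ-1))) := by
  set c1 := 2 * (θ - 1) / S with hc1def
  have hc1 : 0 < c1 := by
    apply div_pos (by linarith) hS
  set g : ℝ → ℝ := fun τ => W τ ^ (1-θ) - c1 * τ with hgdef
  have hg : ∀ τ, 0 < τ → HasDerivAt g
      ((-(2 * L τ)) * (1-θ) * W τ ^ (1-θ-1) - c1) τ := by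
    intro τ hτ
    exact ((hW τ hτ).rpow_const (Or.inl (ne_of_gt (hWpos τ hτ)))).sub
      ((hasDerivAt_id τ).const_mul c1 |>.congr_deriv (by ring))
  have hg' : ∀ τ, 0 < τ → 0 ≤ (-(2 * L τ)) * (1-θ) * W τ ^ (1-θ-1) - c1 := by
    intro τ hτ
    have hWτ := hWpos τ hτ
    have hWθ : 0 < W τ ^ θ := Real.rpow_pos_of_pos hWτ _
    have hpow : W τ ^ (1-θ-1) = (W τ ^ θ)⁻¹ := by
      rw [show (1-θ-1 : ℝ) = -θ by ring, Real.rpow_neg (le_of_lt hWτ)]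
    have hL : W τ ^ θ / S ≤ L τ := (div_le_iff₀ hS).mpr (by linarith [hkey τ hτ])
    have h1 : (-(2 * L τ)) * (1-θ) = (θ - 1) * (2 * L τ) := by ring
    rw [h1, hpow]
    have h2 : (θ - 1) * (2 * (W τ ^ θ / S)) ≤ (θ - 1) * (2 * L τ) := by
      apply mul_le_mul_of_nonneg_left (by linarith) (by linarith)
    have h3 := mul_le_mul_of_nonneg_right h2 (le_of_lt (inv_pos.mpr hWθ))
    have h4 : (θ - 1) * (2 * (W τ ^ θ / S)) * (W τ ^ θ)⁻¹ = c1 := by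
      rw [hc1def]
      field_simp
    linarith
  -- g is monotone on (0, ∞), in particular on [a, t]
  have hmono : ∀ a, 0 < a → a ≤ t → g a ≤ g t := by
    intro a ha hat
    have hmo : MonotoneOn g (Set.Ici a) := by
      apply monotoneOn_of_deriv_nonneg (convex_Ici a)
      · intro τ hτ
        exact (hg τ (lt_of_lt_of_le ha hτ)).continuousAt.continuousWithinAt
      · intro τ hτ
        rw [interior_Ici] at hτ
        exact ((hg τ (lt_trans ha hτ)).differentiableAt).differentiableWithinAt
      · intro τ hτ
        rw [interior_Ici] at hτ
        rw [(hg τ (lt_trans ha hτ)).deriv]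
        exact hg' τ (lt_trans ha hτ)
    exact hmo (Set.self_mem_Ici) hat hat
  have hWt := hWpos t ht
  have hbound : c1 * t ≤ W t ^ (1-θ) := by
    refine le_of_forall_pos_le_add fun ε hε => ?_
    set a := min t (ε/c1) with hadef
    have ha : 0 < a := lt_min ht (div_pos hε hc1)
    have hat : a ≤ t := min_le_left _ _
    have := hmono a ha hat
    have hWa : 0 < W a ^ (1-θ) := Real.rpow_pos_of_pos (hWpos a ha) _
    have hca : c1 * a ≤ ε := by
      have : a ≤ ε/c1 := min_le_right _ _
      rw [mul_comm, ← le_div_iff₀ hc1]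
      exact this
    simp only [hgdef] at this
    linarith
  have hct : 0 < c1 * t := mul_pos hc1 ht
  -- invert
  have hinv : W t ^ (θ-1) ≤ (c1 * t)⁻¹ := by
    have h5 : W t ^ (1-θ) = (W t ^ (θ-1))⁻¹ := by
      rw [← Real.rpow_neg (le_of_lt hWt)]
      norm_num
    rw [h5] at hbound
    have h6 : 0 < W t ^ (θ-1) := Real.rpow_pos_of_pos hWt _
    rw [le_inv_comm₀ hct h6] at hbound
    exact hbound
  have h7 : W t = (W t ^ (θ-1)) ^ ((θ-1)⁻¹) := by
    rw [← Real.rpow_mul (le_of_lt hWt), mul_inv_cancel₀ (by linarith), Real.rpow_one]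
  rw [h7]
  calc (W t ^ (θ-1)) ^ ((θ-1)⁻¹) ≤ ((c1 * t)⁻¹) ^ ((θ-1)⁻¹) := by
        apply Real.rpow_le_rpow (le_of_lt (Real.rpow_pos_of_pos hWt _)) hinv
        exact inv_nonneg.mpr (by linarith)
    _ = (c1 * t) ^ (-(1/(θ-1))) := by
        rw [← Real.rpow_neg_one (c1*t), ← Real.rpow_mul (le_of_lt hct)]
        norm_num
section
variable {X : Type*} (m : X → ℝ) (p S : ℝ) (φ : ℕ → X → ℝ) (lam : ℕ → ℝ)

/-- The on-diagonal heat kernel bound from the Sobolev inequality (one time, one point). -/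
lemma aux_diag
    (hm_pos : ∀ x, 0 < m x)
    (hp : 2 < p) (hS : 0 < S)
    (hφ_sum : ∀ i j, Summable (fun x => φ i x * φ j x * m x))
    (hφ_orth : ∀ i j, (∑' x, φ i x * φ j x * m x) = if i = j then (1 : ℝ) else 0)
    (hlam_nonneg : ∀ i, 0 ≤ lam i)
    (hdiag_sum : ∀ t : ℝ, 0 < t → ∀ x : X,
      Summable (fun i => Real.exp (-t * lam i) * φ i x ^ 2))
    (hker_sum : ∀ t : ℝ, 0 < t → ∀ x y : X,
      Summable (fun i => Real.exp (-t * lam i) * φ i x * φ i y))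
    (hker_nonneg : ∀ t : ℝ, 0 < t → ∀ x y : X,
      0 ≤ ∑' i, Real.exp (-t * lam i) * φ i x * φ i y)
    (hmarkov : ∀ t : ℝ, 0 < t → ∀ x : X,
      ∑' y, ENNReal.ofReal ((∑' i, Real.exp (-t * lam i) * φ i x * φ i y) * m y) ≤ 1)
    (hsob : ∀ t : ℝ, 0 < t → ∀ x : X,
      (∑' y, ENNReal.ofReal ((∑' i, Real.exp (-t * lam i) * φ i x * φ i y) ^ p * m y))
          ^ (2 / p)
        ≤ ENNReal.ofReal (S * ∑' i, lam i * Real.exp (-2 * t * lam i) * φ i x ^ 2))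
    (x : X) (t : ℝ) (ht : 0 < t) :
    (∑' i, Real.exp (-2 * t * lam i) * φ i x ^ 2) ^ (2 - 2/p)
      ≤ S * ∑' i, lam i * Real.exp (-2 * t * lam i) * φ i x ^ 2 := by
  have hm0 : ∀ y, 0 ≤ m y := fun y => (hm_pos y).le
  set s : X → ℝ := fun y => ∑' i, Real.exp (-t * lam i) * φ i x * φ i y with hsdef
  have hs0 : ∀ y, 0 ≤ s y := fun y => hker_nonneg t ht x y
  set Λ : ℝ := ∑' i, lam i * Real.exp (-2 * t * lam i) * φ i x ^ 2 with hΛdef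
  have hΛ0 : 0 ≤ Λ := tsum_nonneg fun i =>
    mul_nonneg (mul_nonneg (hlam_nonneg i) (Real.exp_pos _).le) (sq_nonneg _)
  have hSΛ0 : 0 ≤ S * Λ := mul_nonneg hS.le hΛ0
  -- Markov data
  have hmar := hmarkov t ht x
  have hBne : ∑' y, ENNReal.ofReal (s y * m y) ≠ ⊤ :=
    ne_top_of_le_ne_top ENNReal.one_ne_top hmar
  obtain ⟨hBsum, hBeq⟩ := aux_ofReal_tsum (fun y => mul_nonneg (hs0 y) (hm0 y)) hBne
  have hB1 : ∑' y, s y * m y ≤ 1 := by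
    rw [← ENNReal.ofReal_le_one, hBeq]; exact hmar
  -- Sobolev data
  have hsb := hsob t ht x
  have hppos : (0:ℝ) < 2/p := by positivity
  have hTne : ∑' y, ENNReal.ofReal (s y ^ p * m y) ≠ ⊤ := by
    intro h
    rw [h, ENNReal.top_rpow_of_pos hppos] at hsb
    exact ENNReal.ofReal_ne_top (top_le_iff.mp hsb)
  have hsp0 : ∀ y, 0 ≤ s y ^ p * m y := fun y =>
    mul_nonneg (Real.rpow_nonneg (hs0 y) _) (hm0 y)
  obtain ⟨hAsum, hAeq⟩ := aux_ofReal_tsum hsp0 hTne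
  set A : ℝ := ∑' y, s y ^ p * m y with hAdef
  have hA0 : 0 ≤ A := tsum_nonneg hsp0
  have hA2p : A ^ ((2:ℝ)/p) ≤ S * Λ := by
    have h1 : ENNReal.ofReal (A ^ ((2:ℝ)/p)) ≤ ENNReal.ofReal (S * Λ) := by
      rw [← ENNReal.ofReal_rpow_of_nonneg hA0 hppos.le, hAeq]
      exact hsb
    exact (ENNReal.ofReal_le_ofReal_iff hSΛ0).mp h1
  -- ℓ² data by interpolation
  obtain ⟨hC, hCle⟩ := aux_interp hp hs0 hm0 hAsum hBsum hB1
  set N2 : ℝ := ∑' y, s y ^ 2 * m y with hN2def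
  -- Bessel: ∑' i, e^{-2tλ_i} φ_i(x)² ≤ N2
  have hφ2 : ∀ j, Summable (fun y => φ j y ^ 2 * m y) :=
    fun j => (hφ_sum j j).congr (fun y => by ring)
  have hφ2sum : ∀ j, ∑' y, φ j y ^ 2 * m y = 1 := by
    intro j
    have := hφ_orth j j
    rw [if_pos rfl] at this
    rw [← this]
    exact tsum_congr fun y => by ring
  set c : ℕ → ℝ := fun j => Real.exp (-t * lam j) * φ j x with hcdef
  set d : ℕ → ℝ := fun i => Real.exp (-(2*t) * lam i) * φ i x ^ 2 with hddef
  have hd0 : ∀ i, 0 ≤ d i := fun i => mul_nonneg (Real.exp_pos _).le (sq_nonneg _)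
  have hcd : ∀ j, c j ^ 2 = d j := by
    intro j
    rw [hcdef, hddef]
    simp only [mul_pow, sq (Real.exp (-t * lam j)), ← Real.exp_add]
    congr 2
    ring
  have hdsum : Summable d := hdiag_sum (2*t) (by positivity) x
  set sN : ℕ → X → ℝ := fun N y => ∑ j ∈ Finset.range N, c j * φ j y with hsNdef
  have hsφ : ∀ j, Summable (fun y => s y * φ j y * m y) :=
    fun j => (aux_cs hm0 hC (hφ2 j)).1
  have hsNφ : ∀ N j, Summable (fun y => sN N y * φ j y * m y) := by
    intro N j
    have : ∀ y, sN N y * φ j y * m y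
        = ∑ l ∈ Finset.range N, c l * (φ l y * φ j y * m y) := by
      intro y
      rw [hsNdef]
      simp only [Finset.sum_mul]
      exact Finset.sum_congr rfl fun l _ => by ring
    exact (summable_sum fun l _ => ((hφ_sum l j).mul_left (c l))).congr
      fun y => (this y).symm
  have hsSN : ∀ N, Summable (fun y => s y * sN N y * m y) := by
    intro N
    have : ∀ y, s y * sN N y * m y
        = ∑ l ∈ Finset.range N, c l * (s y * φ l y * m y) := by
      intro y
      rw [hsNdef]
      simp only [Finset.mul_sum, Finset.sum_mul]
      exact Finset.sum_congr rfl fun l _ => by ring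
    exact (summable_sum fun l _ => ((hsφ l).mul_left (c l))).congr
      fun y => (this y).symm
  have hsSNval : ∀ N, (∑' y, s y * sN N y * m y)
      = ∑ l ∈ Finset.range N, c l * ∑' y, s y * φ l y * m y := by
    intro N
    have h1 : ∀ y, s y * sN N y * m y
        = ∑ l ∈ Finset.range N, c l * (s y * φ l y * m y) := by
      intro y
      rw [hsNdef]
      simp only [Finset.mul_sum, Finset.sum_mul]
      exact Finset.sum_congr rfl fun l _ => by ring
    rw [tsum_congr h1, Summable.tsum_finsetSum (fun l _ => (hsφ l).mul_left (c l))]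
    exact Finset.sum_congr rfl fun l _ => tsum_mul_left
  -- partial sums of the kernel converge pointwise to s
  have hconv : ∀ y, Filter.Tendsto (fun M => sN M y) Filter.atTop (nhds (s y)) := by
    intro y
    exact (hker_sum t ht x y).hasSum.tendsto_sum_nat
  -- the ℓ² distance between s and its partial expansion is controlled by the tail
  set tail : ℕ → ℝ := fun N => (∑' i, d i) - ∑ j ∈ Finset.range N, d j with htaildef
  have htail0 : ∀ N, 0 ≤ tail N := by
    intro N
    have := Summable.sum_le_tsum (Finset.range N) (fun i _ => hd0 i) hdsum
    rw [htaildef]; dsimp only; linarith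
  have htail_to : Filter.Tendsto tail Filter.atTop (nhds 0) := by
    have h1 := hdsum.hasSum.tendsto_sum_nat
    have h2 := Filter.Tendsto.sub (tendsto_const_nhds
      (x := ∑' i, d i) (f := Filter.atTop)) h1
    simpa using h2
  have hsNsq : ∀ (F : Finset ℕ), Summable (fun y => (∑ j ∈ F, c j * φ j y) ^ 2 * m y) ∧
      ∑' y, (∑ j ∈ F, c j * φ j y) ^ 2 * m y = ∑ j ∈ F, (c j) ^ 2 :=
    fun F => aux_parseval m φ hφ_sum hφ_orth c F
  have hdiffsum : ∀ N, Summable (fun y => (s y - sN N y) ^ 2 * m y) := by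
    intro N
    have hpt : ∀ y, (s y - sN N y) ^ 2 * m y
        = s y ^ 2 * m y - 2 * (s y * sN N y * m y) + sN N y ^ 2 * m y := by
      intro y; ring
    exact ((hC.sub ((hsSN N).mul_left 2)).add (hsNsq (Finset.range N)).1).congr
      fun y => (hpt y).symm
  have hdiff : ∀ N, ∑' y, (s y - sN N y) ^ 2 * m y ≤ tail N := by
    intro N
    refine Summable.tsum_le_of_sum_le (hdiffsum N) fun F => ?_
    have hlim : Filter.Tendsto (fun M => ∑ y ∈ F, (sN M y - sN N y) ^ 2 * m y)
        Filter.atTop (nhds (∑ y ∈ F, (s y - sN N y) ^ 2 * m y)) := by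
      refine tendsto_finset_sum F fun y _ => ?_
      have h1 : Filter.Tendsto (fun M => sN M y - sN N y) Filter.atTop
          (nhds (s y - sN N y)) := (hconv y).sub tendsto_const_nhds
      exact (h1.pow 2).mul_const (m y)
    refine le_of_tendsto hlim ?_
    filter_upwards [Filter.eventually_ge_atTop N] with M hM
    have hdiffN : ∀ y, sN M y - sN N y = ∑ j ∈ Finset.Ico N M, c j * φ j y := by
      intro y
      rw [hsNdef]
      exact (Finset.sum_Ico_eq_sub _ hM).symm
    calc ∑ y ∈ F, (sN M y - sN N y) ^ 2 * m y
        = ∑ y ∈ F, (∑ j ∈ Finset.Ico N M, c j * φ j y) ^ 2 * m y := by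
          exact Finset.sum_congr rfl fun y _ => by rw [hdiffN]
      _ ≤ ∑' y, (∑ j ∈ Finset.Ico N M, c j * φ j y) ^ 2 * m y := by
          refine Summable.sum_le_tsum F (fun y _ => mul_nonneg (sq_nonneg _) (hm0 y))
            (hsNsq (Finset.Ico N M)).1
      _ = ∑ j ∈ Finset.Ico N M, (c j) ^ 2 := (hsNsq (Finset.Ico N M)).2
      _ = ∑ j ∈ Finset.range M, d j - ∑ j ∈ Finset.range N, d j := by
          simp_rw [hcd]
          exact Finset.sum_Ico_eq_sub _ hM
      _ ≤ tail N := by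
          have := Summable.sum_le_tsum (Finset.range M) (fun i _ => hd0 i) hdsum
          rw [htaildef]; dsimp only; linarith
  -- coefficient identity
  have hci : ∀ i, ∑' y, s y * φ i y * m y = c i := by
    intro i
    have hNval : ∀ N, i < N → ∑' y, sN N y * φ i y * m y = c i := by
      intro N hiN
      have h1 : ∀ y, sN N y * φ i y * m y
          = ∑ l ∈ Finset.range N, c l * (φ l y * φ i y * m y) := by
        intro y
        rw [hsNdef]
        simp only [Finset.sum_mul]
        exact Finset.sum_congr rfl fun l _ => by ring
      rw [tsum_congr h1, Summable.tsum_finsetSum (fun l _ => (hφ_sum l i).mul_left (c l))]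
      simp_rw [tsum_mul_left]
      have h2 : ∀ l, c l * ∑' y, φ l y * φ i y * m y = if l = i then c i else 0 := by
        intro l
        rw [hφ_orth l i]
        by_cases h : l = i <;> simp [h]
      simp_rw [h2]
      rw [Finset.sum_ite_eq' (Finset.range N) i (fun _ => c i),
        if_pos (Finset.mem_range.mpr hiN)]
    -- now the limit argument
    have hsub : ∀ N, ∑' y, s y * φ i y * m y - ∑' y, sN N y * φ i y * m y
        = ∑' y, (s y - sN N y) * φ i y * m y := by
      intro N
      rw [← Summable.tsum_sub (hsφ i) (hsNφ N i)]
      exact tsum_congr fun y => by ring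
    have hbd : ∀ N, i < N →
        |∑' y, s y * φ i y * m y - c i| ≤ (tail N) ^ ((1:ℝ)/2) := by
      intro N hiN
      rw [← hNval N hiN, hsub N]
      have hcs := (aux_cs hm0 (hdiffsum N) (hφ2 i)).2
      rw [hφ2sum i] at hcs
      calc |∑' y, (s y - sN N y) * φ i y * m y|
          ≤ (∑' y, (s y - sN N y) ^ 2 * m y) ^ ((1:ℝ)/2) * (1:ℝ) ^ ((1:ℝ)/2) := hcs
        _ = (∑' y, (s y - sN N y) ^ 2 * m y) ^ ((1:ℝ)/2) := by
            rw [Real.one_rpow, mul_one]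
        _ ≤ (tail N) ^ ((1:ℝ)/2) := by
            apply Real.rpow_le_rpow (tsum_nonneg fun y =>
              mul_nonneg (sq_nonneg _) (hm0 y)) (hdiff N)
            norm_num
    have hto : Filter.Tendsto (fun N => (tail N) ^ ((1:ℝ)/2)) Filter.atTop (nhds 0) := by
      have h1 : Filter.Tendsto (fun N => Real.sqrt (tail N)) Filter.atTop (nhds 0) := by
        have := Real.continuous_sqrt.tendsto 0
        rw [Real.sqrt_zero] at this
        exact this.comp htail_to
      refine h1.congr fun N => ?_
      rw [Real.sqrt_eq_rpow]
    have habs : |∑' y, s y * φ i y * m y - c i| ≤ 0 := by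
      refine ge_of_tendsto hto ?_
      filter_upwards [Filter.eventually_gt_atTop i] with N hN
      exact hbd N hN
    have := abs_nonneg (∑' y, s y * φ i y * m y - c i)
    have : |∑' y, s y * φ i y * m y - c i| = 0 := le_antisymm habs this
    have := abs_eq_zero.mp this
    linarith [this]
  -- Bessel's inequality
  have hbes : ∑' i, d i ≤ N2 := by
    refine Summable.tsum_le_of_sum_le hdsum fun F => ?_
    obtain ⟨N, hFN⟩ := F.exists_nat_subset_range
    have hexp : ∑' y, (s y - sN N y) ^ 2 * m y
        = N2 - 2 * (∑' y, s y * sN N y * m y) + ∑ j ∈ Finset.range N, c j ^ 2 := by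
      have hpt : ∀ y, (s y - sN N y) ^ 2 * m y
          = (s y ^ 2 * m y - 2 * (s y * sN N y * m y)) + sN N y ^ 2 * m y :=
        fun y => by ring
      rw [tsum_congr hpt,
        Summable.tsum_add (hC.sub ((hsSN N).mul_left 2)) (hsNsq (Finset.range N)).1,
        Summable.tsum_sub hC ((hsSN N).mul_left 2), tsum_mul_left,
        (hsNsq (Finset.range N)).2]
    have hval : ∑' y, s y * sN N y * m y = ∑ j ∈ Finset.range N, c j ^ 2 := by
      rw [hsSNval N]
      exact Finset.sum_congr rfl fun l _ => by rw [hci l, sq]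
    have h0 : 0 ≤ ∑' y, (s y - sN N y) ^ 2 * m y :=
      tsum_nonneg fun y => mul_nonneg (sq_nonneg _) (hm0 y)
    rw [hexp, hval] at h0
    have hdc : ∑ j ∈ Finset.range N, d j = ∑ j ∈ Finset.range N, c j ^ 2 := by
      exact Finset.sum_congr rfl fun j _ => (hcd j).symm
    have hFle : ∑ j ∈ F, d j ≤ ∑ j ∈ Finset.range N, d j :=
      Finset.sum_le_sum_of_subset_of_nonneg hFN (fun i _ _ => hd0 i)
    linarith
  -- final chain
  have hwd : (∑' i, Real.exp (-2 * t * lam i) * φ i x ^ 2) = ∑' i, d i := by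
    refine tsum_congr fun i => ?_
    rw [hddef]
    dsimp only
    rw [show -2 * t * lam i = -(2*t) * lam i by ring]
  have hw0 : 0 ≤ ∑' i, d i := tsum_nonneg hd0
  have hp0 : (0:ℝ) < p := by linarith
  have hp1 : (0:ℝ) < p - 1 := by linarith
  have h3 : A ≤ (S * Λ) ^ (p/2) := by
    have h31 := Real.rpow_le_rpow (Real.rpow_nonneg hA0 _) hA2p (by positivity : (0:ℝ) ≤ p/2)
    rwa [← Real.rpow_mul hA0, show (2/p) * (p/2) = 1 by field_simp, Real.rpow_one] at h31
  have h4 : ∑' i, d i ≤ (S * Λ) ^ (p/(2*(p-1))) := by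
    calc ∑' i, d i ≤ N2 := hbes
      _ ≤ A ^ ((1:ℝ)/(p-1)) := hCle
      _ ≤ ((S * Λ) ^ (p/2)) ^ ((1:ℝ)/(p-1)) := by
          apply Real.rpow_le_rpow hA0 h3 (by positivity)
      _ = (S * Λ) ^ (p/(2*(p-1))) := by
          rw [← Real.rpow_mul hSΛ0]
          congr 1
          field_simp
  rw [hwd]
  calc (∑' i, d i) ^ (2 - 2/p)
      ≤ ((S * Λ) ^ (p/(2*(p-1)))) ^ (2 - 2/p) := by
        apply Real.rpow_le_rpow hw0 h4
        rw [sub_nonneg, div_le_iff₀ hp0]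
        linarith
    _ = S * Λ := by
        rw [← Real.rpow_mul hSΛ0,
          show (p/(2*(p-1))) * (2 - 2/p) = 1 by field_simp, Real.rpow_one]
end

/-- Differentiability in time of the on-diagonal heat kernel. -/
lemma aux_W_hasDeriv {X : Type*} (φ : ℕ → X → ℝ) (lam : ℕ → ℝ) (hlam_nonneg : ∀ i, 0 ≤ lam i)
    (hdiag_sum : ∀ t : ℝ, 0 < t → ∀ x : X,
      Summable (fun i => Real.exp (-t * lam i) * φ i x ^ 2))
    (hsob_sum : ∀ t : ℝ, 0 < t → ∀ x : X,
      Summable (fun i => lam i * Real.exp (-2 * t * lam i) * φ i x ^ 2))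
    (x : X) (τ : ℝ) (hτ : 0 < τ) :
    HasDerivAt (fun τ' => ∑' i, Real.exp (-2 * τ' * lam i) * φ i x ^ 2)
      (-(2 * ∑' i, lam i * Real.exp (-2 * τ * lam i) * φ i x ^ 2)) τ := by
  set g : ℕ → ℝ → ℝ := fun i τ' => Real.exp (-2 * τ' * lam i) * φ i x ^ 2 with hg
  set g' : ℕ → ℝ → ℝ := fun i τ' => Real.exp (-2 * τ' * lam i) * (-2 * lam i) * φ i x ^ 2
    with hg'
  have hderiv : ∀ i τ', HasDerivAt (g i) (g' i τ') τ' := by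
    intro i τ'
    have h1 : HasDerivAt (fun y : ℝ => y * (-2 * lam i)) (-2 * lam i) τ' :=
      hasDerivAt_mul_const _
    have h2 := (h1.exp).mul_const (φ i x ^ 2)
    have e1 : (fun y => Real.exp (y * (-2 * lam i)) * φ i x ^ 2) = g i := by
      funext y
      rw [hg]
      dsimp only
      congr 2
      ring
    have e2 : Real.exp (τ' * (-2 * lam i)) * (-2 * lam i) * φ i x ^ 2 = g' i τ' := by
      rw [hg']
      dsimp only
      congr 2
      ring
    rw [e1, e2] at h2
    exact h2
  set u : ℕ → ℝ := fun i => 2 * (lam i * Real.exp (-2 * (τ/2) * lam i) * φ i x ^ 2) with hu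
  have husum : Summable u := (hsob_sum (τ/2) (by positivity) x).mul_left 2
  have hbound : ∀ i, ∀ y ∈ Set.Ioi (τ/2), ‖g' i y‖ ≤ u i := by
    intro i y hy
    have hy' : τ/2 < y := hy
    have habs : ‖g' i y‖ = 2 * (lam i * Real.exp (-2 * y * lam i) * φ i x ^ 2) := by
      rw [hg']
      dsimp only
      rw [Real.norm_eq_abs, abs_of_nonpos]
      · ring
      · have h0 : 0 ≤ Real.exp (-2 * y * lam i) * lam i * φ i x ^ 2 :=
          mul_nonneg (mul_nonneg (Real.exp_pos _).le (hlam_nonneg i)) (sq_nonneg _)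
        nlinarith
    rw [habs, hu]
    have hexp : Real.exp (-2 * y * lam i) ≤ Real.exp (-2 * (τ/2) * lam i) := by
      apply Real.exp_le_exp.mpr
      nlinarith [hlam_nonneg i]
    have h1 : lam i * Real.exp (-2 * y * lam i) * φ i x ^ 2
        ≤ lam i * Real.exp (-2 * (τ/2) * lam i) * φ i x ^ 2 := by
      apply mul_le_mul_of_nonneg_right _ (sq_nonneg _)
      exact mul_le_mul_of_nonneg_left hexp (hlam_nonneg i)
    linarith
  have hg0τ : Summable (fun i => g i τ) := by
    have := hdiag_sum (2*τ) (by positivity) x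
    refine this.congr fun i => ?_
    rw [hg]
    dsimp only
    congr 2
    ring
  have hmain := hasDerivAt_tsum_of_isPreconnected husum (isOpen_Ioi (a := τ/2))
    (isPreconnected_Ioi) (fun i y _ => hderiv i y) hbound
    (Set.mem_Ioi.mpr (by linarith) : τ ∈ Set.Ioi (τ/2)) hg0τ
    (Set.mem_Ioi.mpr (by linarith) : τ ∈ Set.Ioi (τ/2))
  have hval : ∑' i, g' i τ = -(2 * ∑' i, lam i * Real.exp (-2 * τ * lam i) * φ i x ^ 2) := by
    have h1 : ∀ i, g' i τ = (-2) * (lam i * Real.exp (-2 * τ * lam i) * φ i x ^ 2) := by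
      intro i
      rw [hg']
      dsimp only
      ring
    rw [tsum_congr h1, tsum_mul_left]
    ring
  rw [hval] at hmain
  exact hmain


/-- (eigenvalue lower bound of Theorem `thm:pSobolev`, stated via the
eigenfunction expansion `p_t(x,y) = ∑ᵢ e^{−tλᵢ} φᵢ(x) φᵢ(y)` of the heat kernel of the
generator of a Dirichlet form satisfying the `ℓ^p`-Sobolev inequality with constant `S`).
Here `(φᵢ)` is orthonormal in `ℓ²(X,m)`, `m` has finite total mass, and the assumptions
(i), (ii), (iii) are as in Statement 8. The conclusion is that for every `k ≥ 1`,
`(1/k)∑_{i=1}^k λᵢ ≥ (1/(eS))·(k/m(X))^{1−2/p}`, and in particular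
`λ_k ≥ (1/(eS))·(k/m(X))^{1−2/p}`. -/
theorem eigenvalue_lower_bound_pSobolev
    {X : Type*} [Countable X] (m : X → ℝ)
    (hm_pos : ∀ x, 0 < m x) (hm_fin : Summable m)
    (p S : ℝ) (hp : 2 < p) (hS : 0 < S)
    (φ : ℕ → X → ℝ)
    (hφ_sum : ∀ i j, Summable (fun x => φ i x * φ j x * m x))
    (hφ_orth : ∀ i j, (∑' x, φ i x * φ j x * m x) = if i = j then (1 : ℝ) else 0)
    (lam : ℕ → ℝ)
    (hlam_nonneg : ∀ i, 0 ≤ lam i) (hlam_mono : Monotone lam)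
    (hdiag_sum : ∀ t : ℝ, 0 < t → ∀ x : X,
      Summable (fun i => Real.exp (-t * lam i) * φ i x ^ 2))
    (hker_sum : ∀ t : ℝ, 0 < t → ∀ x y : X,
      Summable (fun i => Real.exp (-t * lam i) * φ i x * φ i y))
    (hker_nonneg : ∀ t : ℝ, 0 < t → ∀ x y : X,
      0 ≤ ∑' i, Real.exp (-t * lam i) * φ i x * φ i y)
    (hmarkov : ∀ t : ℝ, 0 < t → ∀ x : X,
      ∑' y, ENNReal.ofReal ((∑' i, Real.exp (-t * lam i) * φ i x * φ i y) * m y) ≤ 1)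
    (hsob_sum : ∀ t : ℝ, 0 < t → ∀ x : X,
      Summable (fun i => lam i * Real.exp (-2 * t * lam i) * φ i x ^ 2))
    (hsob : ∀ t : ℝ, 0 < t → ∀ x : X,
      (∑' y, ENNReal.ofReal ((∑' i, Real.exp (-t * lam i) * φ i x * φ i y) ^ p * m y))
          ^ (2 / p)
        ≤ ENNReal.ofReal (S * ∑' i, lam i * Real.exp (-2 * t * lam i) * φ i x ^ 2)) :
    ∀ k : ℕ, 0 < k →
      (1 / (k : ℝ)) * ∑ i ∈ Finset.range k, lam i
          ≥ (1 / (Real.exp 1 * S)) * ((k : ℝ) / ∑' x, m x) ^ (1 - 2 / p)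
      ∧ lam (k - 1) ≥ (1 / (Real.exp 1 * S)) * ((k : ℝ) / ∑' x, m x) ^ (1 - 2 / p) := by
  intro k hk
  have hp0 : (0:ℝ) < p := by linarith
  set δ : ℝ := 1 - 2/p with hδdef
  have hδ : 0 < δ := by
    rw [hδdef, sub_pos, div_lt_one hp0]
    linarith
  set θ : ℝ := 2 - 2/p with hθdef
  have hθ1 : 1 < θ := by rw [hθdef]; rw [hδdef] at hδ; linarith
  have hθδ : θ - 1 = δ := by rw [hθdef, hδdef]; ring
  -- X is nonempty and the total mass is positive
  have hX : Nonempty X := by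
    by_contra h
    rw [not_nonempty_iff] at h
    have := hφ_orth 0 0
    rw [tsum_empty, if_pos rfl] at this
    norm_num at this
  obtain ⟨x0⟩ := hX
  set M : ℝ := ∑' x, m x with hMdef
  have hM : 0 < M := Summable.tsum_pos hm_fin (fun x => (hm_pos x).le) x0 (hm_pos x0)
  set c1 : ℝ := 2 * (θ - 1) / S with hc1def
  have hc1 : 0 < c1 := div_pos (by rw [hθδ]; linarith) hS
  set B : ℝ → ℝ := fun τ => (c1 * τ) ^ (-(1/(θ-1))) with hBdef
  -- pointwise on-diagonal bound
  have hdiagbound : ∀ x : X, ∀ τ : ℝ, 0 < τ →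
      (∑' i, Real.exp (-2 * τ * lam i) * φ i x ^ 2) ≤ B τ := by
    intro x τ hτ
    by_cases hx : ∀ i, φ i x = 0
    · have h0 : (∑' i, Real.exp (-2 * τ * lam i) * φ i x ^ 2) = 0 := by
        have he : (fun i => Real.exp (-2 * τ * lam i) * φ i x ^ 2) = fun _ => (0:ℝ) := by
          funext i; rw [hx i]; ring
        rw [he, tsum_zero]
      rw [h0, hBdef]
      positivity
    · push_neg at hx
      obtain ⟨i0, hi0⟩ := hx
      have hWsum : ∀ τ' : ℝ, 0 < τ' →
          Summable (fun i => Real.exp (-2 * τ' * lam i) * φ i x ^ 2) := by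
        intro τ' hτ'
        exact (hdiag_sum (2*τ') (by positivity) x).congr fun i => by
          rw [show -(2*τ') * lam i = -2 * τ' * lam i by ring]
      have hWpos : ∀ τ' : ℝ, 0 < τ' →
          0 < ∑' i, Real.exp (-2 * τ' * lam i) * φ i x ^ 2 := by
        intro τ' hτ'
        refine Summable.tsum_pos (hWsum τ' hτ')
          (fun i => mul_nonneg (Real.exp_pos _).le (sq_nonneg _)) i0 ?_
        exact mul_pos (Real.exp_pos _) (by positivity)
      have := aux_ode (W := fun τ' => ∑' i, Real.exp (-2 * τ' * lam i) * φ i x ^ 2)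
        (L := fun τ' => ∑' i, lam i * Real.exp (-2 * τ' * lam i) * φ i x ^ 2)
        hθ1 hS
        (fun τ' hτ' => aux_W_hasDeriv φ lam hlam_nonneg hdiag_sum hsob_sum x τ' hτ')
        hWpos
        (fun τ' hτ' => aux_diag m p S φ lam hm_pos hp hS hφ_sum hφ_orth hlam_nonneg
          hdiag_sum hker_sum hker_nonneg hmarkov hsob x τ' hτ')
        hτ
      exact this
  -- trace bound on the first k eigenvalues
  have htrace : ∀ τ : ℝ, 0 < τ →
      (∑ i ∈ Finset.range k, Real.exp (-2 * τ * lam i)) ≤ M * B τ := by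
    intro τ hτ
    have hBpos : 0 < B τ := by rw [hBdef]; positivity
    have h1 : ∀ i, Real.exp (-2 * τ * lam i)
        = ∑' x, Real.exp (-2 * τ * lam i) * (φ i x * φ i x * m x) := by
      intro i
      rw [tsum_mul_left, hφ_orth i i, if_pos rfl, mul_one]
    have h2 : ∀ x, (∑ i ∈ Finset.range k, Real.exp (-2 * τ * lam i) * (φ i x * φ i x * m x))
        ≤ B τ * m x := by
      intro x
      have e1 : ∀ i, Real.exp (-2 * τ * lam i) * (φ i x * φ i x * m x)
          = (Real.exp (-2 * τ * lam i) * φ i x ^ 2) * m x := fun i => by ring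
      simp_rw [e1, ← Finset.sum_mul]
      apply mul_le_mul_of_nonneg_right _ (hm_pos x).le
      calc ∑ i ∈ Finset.range k, Real.exp (-2 * τ * lam i) * φ i x ^ 2
          ≤ ∑' i, Real.exp (-2 * τ * lam i) * φ i x ^ 2 := by
            refine Summable.sum_le_tsum _ (fun i _ => mul_nonneg (Real.exp_pos _).le (sq_nonneg _)) ?_
            exact (hdiag_sum (2*τ) (by positivity) x).congr fun i => by
              rw [show -(2*τ) * lam i = -2 * τ * lam i by ring]
        _ ≤ B τ := hdiagbound x τ hτ
    calc ∑ i ∈ Finset.range k, Real.exp (-2 * τ * lam i)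
        = ∑ i ∈ Finset.range k, ∑' x, Real.exp (-2 * τ * lam i) * (φ i x * φ i x * m x) := by
          exact Finset.sum_congr rfl fun i _ => h1 i
      _ = ∑' x, ∑ i ∈ Finset.range k, Real.exp (-2 * τ * lam i) * (φ i x * φ i x * m x) := by
          rw [Summable.tsum_finsetSum (fun i _ => (hφ_sum i i).mul_left _)]
      _ ≤ ∑' x, B τ * m x := by
          apply Summable.tsum_le_tsum h2
          · exact summable_sum fun i _ => (hφ_sum i i).mul_left _
          · exact hm_fin.mul_left _
      _ = M * B τ := by rw [tsum_mul_left, hMdef, mul_comm]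
  -- the mean eigenvalue
  set Sk : ℝ := ∑ i ∈ Finset.range k, lam i with hSkdef
  have hk0 : (0:ℝ) < k := Nat.cast_pos.mpr hk
  set lbar : ℝ := Sk / k with hlbardef
  have hSk0 : 0 ≤ Sk := Finset.sum_nonneg fun i _ => hlam_nonneg i
  have hlbar0 : 0 ≤ lbar := div_nonneg hSk0 hk0.le
  have hBto : Filter.Tendsto B Filter.atTop (nhds 0) := by
    have h1 : Filter.Tendsto (fun τ => c1 * τ) Filter.atTop Filter.atTop :=
      Filter.Tendsto.const_mul_atTop hc1 Filter.tendsto_id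
    have hδpos : (0:ℝ) < 1/(θ-1) := by rw [hθδ]; positivity
    exact (tendsto_rpow_neg_atTop hδpos).comp h1
  have hlbarpos : 0 < lbar := by
    rcases lt_or_eq_of_le hlbar0 with h | h
    · exact h
    · exfalso
      have hsum0 : Sk = 0 := by
        rw [hlbardef] at h
        field_simp at h
        linarith [h.symm]
      have hall : ∀ i ∈ Finset.range k, lam i = 0 :=
        (Finset.sum_eq_zero_iff_of_nonneg (fun i _ => hlam_nonneg i)).mp hsum0
      have hles : ∀ τ : ℝ, 0 < τ → (k:ℝ) ≤ M * B τ := by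
        intro τ hτ
        have h3 := htrace τ hτ
        have he : ∑ i ∈ Finset.range k, Real.exp (-2*τ*lam i) = (k:ℝ) := by
          calc ∑ i ∈ Finset.range k, Real.exp (-2*τ*lam i)
              = ∑ _i ∈ Finset.range k, (1:ℝ) :=
                Finset.sum_congr rfl fun i hi => by rw [hall i hi]; norm_num
            _ = (k:ℝ) := by simp
        rw [he] at h3
        exact h3
      have hMB : Filter.Tendsto (fun τ => M * B τ) Filter.atTop (nhds (M * 0)) :=
        hBto.const_mul M
      rw [mul_zero] at hMB
      have hev : ∀ᶠ τ in Filter.atTop, M * B τ < 1 :=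
        hMB.eventually_lt_const one_pos
      obtain ⟨τ, hτ1, hτlt⟩ := (Filter.eventually_ge_atTop (1:ℝ)).and hev |>.exists
      have h4 := hles τ (by linarith)
      have h5 : (1:ℝ) ≤ (k:ℝ) := Nat.one_le_cast.mpr hk
      linarith
  set tstar : ℝ := 1 / (2 * δ * lbar) with htstar
  have htpos : 0 < tstar := by rw [htstar]; positivity
  -- AM–GM
  have hamgm : (k:ℝ) * Real.exp (-2 * tstar * lbar)
      ≤ ∑ i ∈ Finset.range k, Real.exp (-2 * tstar * lam i) := by
    have hgm := Real.geom_mean_le_arith_mean_weighted (Finset.range k)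
      (fun _ => 1/(k:ℝ)) (fun i => Real.exp (-2 * tstar * lam i))
      (fun i _ => by positivity)
      (by rw [Finset.sum_const, Finset.card_range, nsmul_eq_mul]; field_simp)
      (fun i _ => (Real.exp_pos _).le)
    have hL : ∏ i ∈ Finset.range k, Real.exp (-2*tstar*lam i) ^ ((1:ℝ)/(k:ℝ))
        = Real.exp (-2*tstar*lbar) := by
      have e1 : ∀ i ∈ Finset.range k, Real.exp (-2*tstar*lam i) ^ ((1:ℝ)/(k:ℝ))
          = Real.exp ((-2*tstar/(k:ℝ)) * lam i) := by
        intro i _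
        rw [← Real.exp_mul]
        congr 1
        ring
      rw [Finset.prod_congr rfl e1, ← Real.exp_sum, ← Finset.mul_sum]
      congr 1
      rw [hlbardef, hSkdef]
      field_simp
    have hR : ∑ i ∈ Finset.range k, (1/(k:ℝ)) * Real.exp (-2*tstar*lam i)
        = (1/(k:ℝ)) * ∑ i ∈ Finset.range k, Real.exp (-2*tstar*lam i) := by
      rw [Finset.mul_sum]
    rw [hL, hR] at hgm
    calc (k:ℝ) * Real.exp (-2*tstar*lbar)
        ≤ (k:ℝ) * ((1/(k:ℝ)) * ∑ i ∈ Finset.range k, Real.exp (-2*tstar*lam i)) :=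
          mul_le_mul_of_nonneg_left hgm hk0.le
      _ = ∑ i ∈ Finset.range k, Real.exp (-2*tstar*lam i) := by
          field_simp
  have hkey := le_trans hamgm (htrace tstar htpos)
  -- unfold the values at tstar
  have h2t : 2 * tstar * lbar = 1/δ := by
    rw [htstar]
    field_simp
  have hc1t : c1 * tstar = 1/(S * lbar) := by
    rw [hc1def, htstar, hθδ]
    field_simp
  have hSl0 : (0:ℝ) ≤ S * lbar := mul_nonneg hS.le hlbar0
  have hBt : B tstar = (S * lbar) ^ ((1:ℝ)/δ) := by
    rw [hBdef]
    dsimp only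
    rw [hc1t, hθδ, one_div (S*lbar), ← Real.rpow_neg_one (S*lbar),
      ← Real.rpow_mul hSl0, show (-1 : ℝ) * (-(1/δ)) = 1/δ by ring]
  have hexp2 : Real.exp (-2 * tstar * lbar) = ((Real.exp 1) ^ ((1:ℝ)/δ))⁻¹ := by
    rw [show -2 * tstar * lbar = -(2 * tstar * lbar) by ring, h2t, Real.exp_neg]
    congr 1
    rw [← Real.exp_mul, one_mul]
  have hepos : (0:ℝ) < (Real.exp 1) ^ ((1:ℝ)/δ) := Real.rpow_pos_of_pos (Real.exp_pos 1) _
  have hkle : (k:ℝ) ≤ M * (Real.exp 1 * S * lbar) ^ ((1:ℝ)/δ) := by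
    rw [hexp2, hBt] at hkey
    have h6 : (k:ℝ) ≤ M * (S * lbar) ^ ((1:ℝ)/δ) * (Real.exp 1) ^ ((1:ℝ)/δ) := by
      have h9 := mul_le_mul_of_nonneg_right hkey hepos.le
      rwa [mul_assoc, inv_mul_cancel₀ (ne_of_gt hepos), mul_one] at h9
    calc (k:ℝ) ≤ M * (S * lbar) ^ ((1:ℝ)/δ) * (Real.exp 1) ^ ((1:ℝ)/δ) := h6
      _ = M * (Real.exp 1 * S * lbar) ^ ((1:ℝ)/δ) := by
          rw [show Real.exp 1 * S * lbar = Real.exp 1 * (S * lbar) by ring,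
            Real.mul_rpow (Real.exp_pos 1).le hSl0]
          ring
  have heSl0 : (0:ℝ) ≤ Real.exp 1 * S * lbar :=
    mul_nonneg (mul_nonneg (Real.exp_pos 1).le hS.le) hlbar0
  have hdiv : (k:ℝ)/M ≤ (Real.exp 1 * S * lbar) ^ ((1:ℝ)/δ) := by
    rw [div_le_iff₀ hM]
    calc (k:ℝ) ≤ M * (Real.exp 1 * S * lbar) ^ ((1:ℝ)/δ) := hkle
      _ = (Real.exp 1 * S * lbar) ^ ((1:ℝ)/δ) * M := by ring
  have hfinal : ((k:ℝ)/M) ^ δ ≤ Real.exp 1 * S * lbar := by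
    have h7 := Real.rpow_le_rpow (div_nonneg hk0.le hM.le) hdiv hδ.le
    rwa [← Real.rpow_mul heSl0, one_div, inv_mul_cancel₀ (ne_of_gt hδ), Real.rpow_one] at h7
  have heS : (0:ℝ) < Real.exp 1 * S := mul_pos (Real.exp_pos 1) hS
  have hconc : (1 / (Real.exp 1 * S)) * ((k:ℝ)/M) ^ δ ≤ lbar := by
    rw [one_div, inv_mul_le_iff₀ heS]
    calc ((k:ℝ)/M) ^ δ ≤ Real.exp 1 * S * lbar := hfinal
      _ = Real.exp 1 * S * lbar := rfl
  constructor
  · rw [ge_iff_le, show (1 / (k:ℝ)) * Sk = lbar from by rw [hlbardef]; ring]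
    exact hconc
  · have hbig : lbar ≤ lam (k-1) := by
      have h8 : Sk ≤ (k:ℝ) * lam (k-1) := by
        calc Sk = ∑ i ∈ Finset.range k, lam i := hSkdef
          _ ≤ ∑ i ∈ Finset.range k, lam (k-1) := by
              refine Finset.sum_le_sum fun i hi => ?_
              exact hlam_mono (Nat.le_sub_one_of_lt (Finset.mem_range.mp hi))
          _ = (k:ℝ) * lam (k-1) := by
              rw [Finset.sum_const, Finset.card_range, nsmul_eq_mul]
      rw [hlbardef, div_le_iff₀ hk0]
      linarith
    rw [ge_iff_le]
    exact le_trans hconc hbig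
end

section
/- Let X be a countably infinite set with an enumeration (x_j)_{j≥1} (a bijection ℕ≥1 → X), let C > 0, and let (a_k)_{k≥1} be a strictly increasing sequence of positive reals with a_k → ∞. Define m : X → ℝ by m(x_j) = a_1²(1/a_j² − 1/a_{j+1}²). Then: (i) m(x) > 0 for all x ∈ X and ∑_{x∈X} m(x) = 1, so m is a probability measure; (ii) for every k ≥ 1, m(X ∖ {x_1,…,x_k}) = a_1²/a_{k+1}²; and (iii) every sequence (λ_k)_{k≥1} of reals satisfying λ_{k+1} ≥ 1/(C · m(X ∖ {x_1,…,x_k})) for all k ≥ 1 satisfies λ_k / a_k → ∞ as k → ∞. (Content of Proposition 'no_upper_bound': on a uniformly transient graph there is no upper bound on eigenvalue growth, since the Dirichlet eigenvalues satisfy λ_{k+1} ≥ 1/(C·m(X∖{x_1,…,x_k})).) -/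
open Filter

/-- content of Proposition `no_upper_bound`.
Let `X` be a countably infinite set enumerated by a bijection `x : ℕ → X` (here `x j`
plays the role of the point `x_{j+1}`), let `C > 0`, and let `(a_k)` be a strictly
increasing sequence of positive reals tending to `∞`. Define the measure `m` by
`m(x_j) = a₁²(1/a_j² − 1/a_{j+1}²)`. Then:
(i) `m > 0` everywhere and `∑_x m(x) = 1`, so `m` is a probability measure;
(ii) for every `k ≥ 1`, `m(X ∖ {x_1, …, x_k}) = a₁²/a_{k+1}²`;
(iii) every sequence `(λ_k)` with `λ_{k+1} ≥ 1/(C·m(X ∖ {x_1, …, x_k}))` for all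
`k ≥ 1` satisfies `λ_k/a_k → ∞`. -/
theorem no_upper_bound_on_eigenvalue_growth
    {X : Type*} (x : ℕ → X) (hx : Function.Bijective x)
    (C : ℝ) (hC : 0 < C)
    (a : ℕ → ℝ) (ha_pos : ∀ k, 0 < a k) (ha_mono : StrictMono a)
    (ha_top : Tendsto a atTop atTop)
    (m : X → ℝ)
    (hm_def : ∀ j : ℕ, m (x j) = (a 0) ^ 2 * (1 / (a j) ^ 2 - 1 / (a (j + 1)) ^ 2)) :
    (∀ y : X, 0 < m y) ∧ (∑' y, m y) = 1
    ∧ (∀ k : ℕ, 0 < k →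
        (∑' y : ({y : X | ∀ j < k, y ≠ x j} : Set X), m ↑y) = (a 0) ^ 2 / (a k) ^ 2)
    ∧ (∀ lam : ℕ → ℝ,
        (∀ k : ℕ, 0 < k →
          lam k ≥ 1 / (C * ∑' y : ({y : X | ∀ j < k, y ≠ x j} : Set X), m ↑y)) →
        Tendsto (fun k => lam k / a k) atTop atTop) := by
  have ha0 : ∀ k, (a k) ≠ 0 := fun k => (ha_pos k).ne'
  set g : ℕ → ℝ := fun k => (a 0) ^ 2 / (a k) ^ 2 with hg
  have hgf : ∀ j, m (x j) = g j - g (j + 1) := by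
    intro j
    rw [hm_def j]
    field_simp [hg]
    ring
  have hmpos : ∀ j, 0 < m (x j) := by
    intro j
    rw [hm_def j]
    have h1 : a j < a (j + 1) := ha_mono (Nat.lt_succ_self j)
    have h2 : 0 < a j := ha_pos j
    have h3 : (a j) ^ 2 < (a (j + 1)) ^ 2 := by nlinarith
    have h4 : 1 / (a (j + 1)) ^ 2 < 1 / (a j) ^ 2 :=
      one_div_lt_one_div_of_lt (pow_pos h2 2) h3
    have h5 : 0 < (a 0) ^ 2 := pow_pos (ha_pos 0) 2
    nlinarith
  have hsq : Tendsto (fun k => (a k) ^ 2) atTop atTop :=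
    (tendsto_pow_atTop (two_ne_zero)).comp ha_top
  have hg0 : Tendsto g atTop (nhds 0) := by
    simpa [hg] using Tendsto.div_atTop (tendsto_const_nhds (x := (a 0) ^ 2)) hsq
  have key : ∀ k, HasSum (fun n => m (x (n + k))) (g k) := by
    intro k
    rw [hasSum_iff_tendsto_nat_of_nonneg (fun n => (hmpos (n + k)).le)]
    have hsum : ∀ n, ∑ i ∈ Finset.range n, m (x (i + k)) = g k - g (n + k) := by
      intro n
      have h := Finset.sum_range_sub' (fun i => g (i + k)) n
      simp only [hgf]
      convert h using 2
      · ring_nf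
      · simp
    simp only [hsum]
    have := tendsto_const_nhds (x := g k) (f := atTop (α := ℕ)) |>.sub
      (hg0.comp (tendsto_add_atTop_nat k))
    simpa using this
  have tail : ∀ k, HasSum (fun y : ({y : X | ∀ j < k, y ≠ x j} : Set X) => m ↑y) (g k) := by
    intro k
    set i : ℕ → ({y : X | ∀ j < k, y ≠ x j} : Set X) := fun n =>
      ⟨x (n + k), by
        intro j hj hne
        have := hx.injective hne
        omega⟩ with hi
    have inj : Function.Injective i := by
      intro p q hpq
      have h1 : x (p + k) = x (q + k) := congrArg Subtype.val hpq
      have := hx.injective h1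
      omega
    have hrange : ∀ y, y ∉ Set.range i → m ↑y = 0 := by
      intro y hy
      exfalso
      obtain ⟨n, hn⟩ := hx.surjective (y : X)
      have hnk : k ≤ n := by
        by_contra h
        exact y.2 n (by omega) hn.symm
      exact hy ⟨n - k, Subtype.ext (by simp only [hi]; rw [← hn]; congr 1; omega)⟩
    rw [← Function.Injective.hasSum_iff inj hrange]
    exact key k
  refine ⟨?_, ?_, ?_, ?_⟩
  · intro y
    obtain ⟨j, rfl⟩ := hx.surjective y
    exact hmpos j
  · have h := key 0
    simp only [add_zero] at h
    have h2 : HasSum m (g 0) := (Equiv.ofBijective x hx).hasSum_iff.mp h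
    rw [h2.tsum_eq]
    simp [hg, div_self (pow_ne_zero 2 (ha0 0))]
  · intro k _
    exact (tail k).tsum_eq
  · intro lam hlam
    have hmono : ∀ k, 1 ≤ k → a k / (C * (a 0) ^ 2) ≤ lam k / a k := by
      intro k hk
      have h := hlam k hk
      rw [(tail k).tsum_eq] at h
      have hak := ha_pos k
      have h0 := ha_pos 0
      have hrw : 1 / (C * ((a 0) ^ 2 / (a k) ^ 2)) = (a k) ^ 2 / (C * (a 0) ^ 2) := by
        field_simp
      rw [hg, hrw] at h
      have heq : a k / (C * (a 0) ^ 2) = ((a k) ^ 2 / (C * (a 0) ^ 2)) / a k := by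
        field_simp
      rw [heq]
      exact div_le_div_of_nonneg_right h hak.le |>.trans_eq rfl
    refine tendsto_atTop_mono' atTop (eventually_atTop.2 ⟨1, hmono⟩) ?_
    exact Tendsto.atTop_div_const (mul_pos hC (pow_pos (ha_pos 0) 2)) ha_top
end

section
/- Let X be a countable set, m : X → ℝ with m(x) > 0 for all x, b : X × X → [0,∞) symmetric with b(x,x) = 0 and ∑_{y∈X} b(x,y) < ∞ for all x, and c : X → [0,∞). Define the energy form Q̃(f) = (1/2)∑_{x,y∈X} b(x,y)(f(x)−f(y))² + ∑_{x∈X} c(x) f(x)² and let D = { f : X → ℝ : ∑_{x∈X} f(x)² m(x) < ∞ and Q̃(f) < ∞ } be the domain of the Neumann form. If every f ∈ D is bounded (i.e. D ⊆ ℓ^∞(X)), then there exists a constant C > 0 such that sup_{x∈X} f(x)² ≤ C (Q̃(f) + ∑_{x∈X} f(x)² m(x)) for all f ∈ D. (Closed-graph bound underlying Lemma 'Canon_Sobolev_embedding' and Proposition 'spectrum_discrete': on a canonically compactifiable graph the embedding of the form domain into ℓ^∞ is bounded.) -/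
open scoped ENNReal

open MeasureTheory in
lemma ennreal_weighted_cs (u : ℕ → ℝ≥0∞) :
    (∑' n, u n) ^ 2 ≤ 2 * ∑' n, 2 ^ n * u n ^ 2 := by
  have h22 : Real.HolderConjugate 2 2 := Real.holderConjugate_iff.mpr ⟨one_lt_two, by norm_num⟩
  set v : ℕ → ℝ≥0∞ := fun n => ((2 : ℝ≥0∞)⁻¹ ^ n) ^ ((2:ℝ)⁻¹) with hv
  set w : ℕ → ℝ≥0∞ := fun n => ((2 : ℝ≥0∞) ^ n * u n ^ 2) ^ ((2:ℝ)⁻¹) with hw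
  have hsq : ∀ a : ℝ≥0∞, (a ^ ((2:ℝ)⁻¹)) ^ (2:ℝ) = a := by
    intro a
    rw [← ENNReal.rpow_mul]
    norm_num
  have hsqn : ∀ a : ℝ≥0∞, (a ^ ((2:ℝ)⁻¹)) ^ (2:ℕ) = a := by
    intro a
    rw [← ENNReal.rpow_natCast (a ^ ((2:ℝ)⁻¹)) 2]
    exact_mod_cast hsq a
  have huvw : ∀ n, u n = v n * w n := by
    intro n
    rw [hv, hw]
    simp only
    rw [← ENNReal.mul_rpow_of_nonneg _ _ (by positivity), ← mul_assoc,
      ← mul_pow, ENNReal.inv_mul_cancel (by norm_num) (by norm_num), one_pow, one_mul,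
      ← ENNReal.rpow_natCast (u n) 2, ← ENNReal.rpow_mul]
    norm_num
  have holder := ENNReal.lintegral_mul_le_Lp_mul_Lq (Measure.count (α := ℕ)) h22
    (f := v) (g := w) measurable_from_top.aemeasurable measurable_from_top.aemeasurable
  simp only [Pi.mul_apply, lintegral_count, one_div] at holder
  have hv2 : ∀ n, v n ^ (2:ℝ) = (2 : ℝ≥0∞)⁻¹ ^ n := fun n => hsq _
  have hw2 : ∀ n, w n ^ (2:ℝ) = (2 : ℝ≥0∞) ^ n * u n ^ 2 := fun n => hsq _
  calc (∑' n, u n) ^ 2 = (∑' n, v n * w n) ^ 2 := by rw [tsum_congr huvw]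
    _ ≤ ((∑' n, v n ^ (2:ℝ)) ^ ((2:ℝ)⁻¹) * (∑' n, w n ^ (2:ℝ)) ^ ((2:ℝ)⁻¹)) ^ 2 :=
        pow_le_pow_left₀ (zero_le) holder 2
    _ = (∑' n, v n ^ (2:ℝ)) * (∑' n, w n ^ (2:ℝ)) := by
        rw [mul_pow, hsqn, hsqn]
    _ = 2 * ∑' n, 2 ^ n * u n ^ 2 := by
        rw [tsum_congr hv2, tsum_congr hw2, ENNReal.tsum_geometric,
          ENNReal.one_sub_inv_two, inv_inv]

lemma real_sq_tsum_le (a : ℕ → ℝ) (ha : ∀ n, 0 ≤ a n) (hs : Summable a) :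
    ENNReal.ofReal ((∑' n, a n) ^ 2) ≤ 2 * ∑' n, 2 ^ n * ENNReal.ofReal (a n ^ 2) := by
  have h1 : ENNReal.ofReal ((∑' n, a n) ^ 2) = (∑' n, ENNReal.ofReal (a n)) ^ 2 := by
    rw [ENNReal.ofReal_pow (tsum_nonneg ha), ENNReal.ofReal_tsum_of_nonneg ha hs]
  rw [h1]
  have := ennreal_weighted_cs (fun n => ENNReal.ofReal (a n))
  calc (∑' n, ENNReal.ofReal (a n)) ^ 2 ≤ 2 * ∑' n, 2 ^ n * ENNReal.ofReal (a n) ^ 2 := this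
    _ = 2 * ∑' n, 2 ^ n * ENNReal.ofReal (a n ^ 2) := by
        congr 1
        exact tsum_congr fun n => by rw [ENNReal.ofReal_pow (ha n)]


lemma swap2 {X : Type*} (v : X → ℝ≥0∞) (d : ℕ → X → ℝ≥0∞) (e : ℕ → ℝ≥0∞)
    (hp : ∀ x, v x ≤ 2 * ∑' n, e n * d n x) :
    ∑' x, v x ≤ 2 * ∑' n, e n * ∑' x, d n x := by
  calc ∑' x, v x ≤ ∑' x, 2 * ∑' n, e n * d n x := ENNReal.tsum_le_tsum hp
    _ = 2 * ∑' x, ∑' n, e n * d n x := ENNReal.tsum_mul_left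
    _ = 2 * ∑' n, ∑' x, e n * d n x := by rw [ENNReal.tsum_comm]
    _ = 2 * ∑' n, e n * ∑' x, d n x := by
        congr 1; exact tsum_congr fun n => ENNReal.tsum_mul_left

lemma swap3 {X : Type*} (v : X → X → ℝ≥0∞) (d : ℕ → X → X → ℝ≥0∞) (e : ℕ → ℝ≥0∞)
    (hp : ∀ x y, v x y ≤ 2 * ∑' n, e n * d n x y) :
    ∑' x, ∑' y, v x y ≤ 2 * ∑' n, e n * ∑' x, ∑' y, d n x y := by
  calc ∑' x, ∑' y, v x y
      ≤ ∑' x, 2 * ∑' n, e n * ∑' y, d n x y := ENNReal.tsum_le_tsum fun x => swap2 _ _ _ (hp x)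
    _ = 2 * ∑' x, ∑' n, e n * ∑' y, d n x y := ENNReal.tsum_mul_left
    _ = 2 * ∑' n, ∑' x, e n * ∑' y, d n x y := by rw [ENNReal.tsum_comm]
    _ = 2 * ∑' n, e n * ∑' x, ∑' y, d n x y := by
        congr 1; exact tsum_congr fun n => ENNReal.tsum_mul_left



/-- closed-graph bound underlying Lemma `Canon_Sobolev_embedding` and
Proposition `spectrum_discrete`. Let `(b,c)` be a graph over a countable set `X` with a
positive weight `m`, with energy form
`Q̃(f) = (1/2)∑_{x,y} b(x,y)(f(x)−f(y))² + ∑_x c(x) f(x)²` (a sum in `ℝ≥0∞`), and let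
`D = {f : ∑_x f(x)² m(x) < ∞ and Q̃(f) < ∞}` be the domain of the Neumann form. If every
`f ∈ D` is bounded, then there is `C > 0` with
`sup_x f(x)² ≤ C (Q̃(f) + ∑_x f(x)² m(x))` for all `f ∈ D`. -/
theorem canonically_compactifiable_sobolev_bound
    {X : Type*} [Countable X] (m : X → ℝ) (hm_pos : ∀ x, 0 < m x)
    (b : X → X → ℝ)
    (hb_sym : ∀ x y, b x y = b y x)
    (hb_nonneg : ∀ x y, 0 ≤ b x y)
    (hb_diag : ∀ x, b x x = 0)
    (hb_row : ∀ x, Summable (fun y => b x y))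
    (c : X → ℝ) (hc : ∀ x, 0 ≤ c x)
    (Qt : (X → ℝ) → ℝ≥0∞)
    (hQt : ∀ f : X → ℝ,
      Qt f = (1 / 2 : ℝ≥0∞) * (∑' x, ∑' y, ENNReal.ofReal (b x y * (f x - f y) ^ 2))
              + ∑' x, ENNReal.ofReal (c x * f x ^ 2))
    (hbounded : ∀ f : X → ℝ,
      Summable (fun x => f x ^ 2 * m x) → Qt f < ⊤ → ∃ B : ℝ, ∀ x, |f x| ≤ B) :
    ∃ C : ℝ, 0 < C ∧ ∀ f : X → ℝ,
      Summable (fun x => f x ^ 2 * m x) → Qt f < ⊤ →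
      ∀ x : X, f x ^ 2 ≤ C * ((Qt f).toReal + ∑' x, f x ^ 2 * m x) := by
  by_contra hcon
  push_neg at hcon
  -- extract a bad sequence
  have H : ∀ n : ℕ, ∃ (f : X → ℝ) (x : X), Summable (fun x => f x ^ 2 * m x) ∧ Qt f < ⊤ ∧
      (((n : ℝ) + 1) ^ 2 * 8 ^ n) * ((Qt f).toReal + ∑' x, f x ^ 2 * m x) < f x ^ 2 := by
    intro n
    obtain ⟨f, h1, h2, x, h3⟩ := hcon (((n : ℝ) + 1) ^ 2 * 8 ^ n) (by positivity)
    exact ⟨f, x, h1, h2, h3⟩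
  choose f xx hsum hfin hbig using H
  set N : ℕ → ℝ := fun n => (Qt (f n)).toReal + ∑' x, f n x ^ 2 * m x with hN
  have hterm_nonneg : ∀ (n : ℕ) (x : X), 0 ≤ f n x ^ 2 * m x :=
    fun n x => mul_nonneg (sq_nonneg _) (hm_pos x).le
  have htsum_nonneg : ∀ n, 0 ≤ ∑' x, f n x ^ 2 * m x := fun n => tsum_nonneg (hterm_nonneg n)
  have hNnonneg : ∀ n, 0 ≤ N n := fun n => add_nonneg ENNReal.toReal_nonneg (htsum_nonneg n)
  have htsum_le_N : ∀ n, ∑' x, f n x ^ 2 * m x ≤ N n :=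
    fun n => le_add_of_nonneg_left ENNReal.toReal_nonneg
  have hQle : ∀ n, Qt (f n) ≤ ENNReal.ofReal (N n) := by
    intro n
    rw [← ENNReal.ofReal_toReal (hfin n).ne]
    exact ENNReal.ofReal_le_ofReal (le_add_of_nonneg_right (htsum_nonneg n))
  have hNpos : ∀ n, 0 < N n := by
    intro n
    rcases (hNnonneg n).lt_or_eq with hlt | heq
    · exact hlt
    exfalso
    have h0 : ∑' x, f n x ^ 2 * m x = 0 :=
      le_antisymm (heq ▸ htsum_le_N n) (htsum_nonneg n)
    have hfx : f n (xx n) = 0 := by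
      have h1 : f n (xx n) ^ 2 * m (xx n) ≤ 0 :=
        h0 ▸ Summable.le_tsum (hsum n) (xx n) (fun y _ => hterm_nonneg n y)
      have h2 : f n (xx n) ^ 2 ≤ 0 := by nlinarith [hm_pos (xx n)]
      exact pow_eq_zero_iff two_ne_zero |>.mp (le_antisymm h2 (sq_nonneg _))
    have h2 := hbig n
    have e : (Qt (f n)).toReal + ∑' x, f n x ^ 2 * m x = N n := rfl
    rw [e, ← heq, mul_zero, hfx] at h2
    simp at h2
  -- rescale
  set s : ℕ → ℝ := fun n => ((8 : ℝ) ^ n * N n)⁻¹ with hs_def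
  have hspos : ∀ n, 0 < s n := fun n => inv_pos.2 (mul_pos (by positivity) (hNpos n))
  have hsN : ∀ n, s n * N n = (8 : ℝ)⁻¹ ^ n := by
    intro n
    show ((8 : ℝ) ^ n * N n)⁻¹ * N n = (8 : ℝ)⁻¹ ^ n
    rw [mul_inv, mul_assoc, inv_mul_cancel₀ (hNpos n).ne', mul_one, inv_pow]
  set h : ℕ → X → ℝ := fun n x => Real.sqrt (s n) * |f n x| with hh
  have hh_nonneg : ∀ n x, 0 ≤ h n x := fun n x => mul_nonneg (Real.sqrt_nonneg _) (abs_nonneg _)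
  have hh_sq : ∀ n x, h n x ^ 2 = s n * f n x ^ 2 := by
    intro n x
    rw [hh]
    rw [mul_pow, Real.sq_sqrt (hspos n).le, sq_abs]
  have hh_summable : ∀ n, Summable (fun x => h n x ^ 2 * m x) := by
    intro n
    have : (fun x => h n x ^ 2 * m x) = fun x => s n * (f n x ^ 2 * m x) := by
      funext x; rw [hh_sq]; ring
    rw [this]
    exact (hsum n).mul_left _
  have hh_tsum_le : ∀ n, ∑' x, h n x ^ 2 * m x ≤ (8 : ℝ)⁻¹ ^ n := by
    intro n
    have e1 : ∑' x, h n x ^ 2 * m x = s n * ∑' x, f n x ^ 2 * m x := by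
      rw [← tsum_mul_left]
      exact tsum_congr fun x => by rw [hh_sq]; ring
    rw [e1, ← hsN n]
    exact mul_le_mul_of_nonneg_left (htsum_le_N n) (hspos n).le
  -- pointwise geometric bound, summability in n
  have hh_pt : ∀ n x, h n x ≤ Real.sqrt (8 : ℝ)⁻¹ ^ n * (Real.sqrt (m x))⁻¹ := by
    intro n x
    have h1 : h n x ^ 2 * m x ≤ (8 : ℝ)⁻¹ ^ n :=
      le_trans (Summable.le_tsum (hh_summable n) x (fun y _ => mul_nonneg (sq_nonneg _) (hm_pos y).le))
        (hh_tsum_le n)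
    have h3 : (Real.sqrt (8 : ℝ)⁻¹ ^ n * (Real.sqrt (m x))⁻¹) ^ 2 = (8 : ℝ)⁻¹ ^ n / m x := by
      have e1 : Real.sqrt (8:ℝ)⁻¹ ^ 2 = (8:ℝ)⁻¹ := Real.sq_sqrt (by norm_num)
      have e2 : Real.sqrt (m x) ^ 2 = m x := Real.sq_sqrt (hm_pos x).le
      calc (Real.sqrt (8 : ℝ)⁻¹ ^ n * (Real.sqrt (m x))⁻¹) ^ 2
          = (Real.sqrt (8:ℝ)⁻¹ ^ 2) ^ n * (Real.sqrt (m x) ^ 2)⁻¹ := by ring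
        _ = (8 : ℝ)⁻¹ ^ n / m x := by rw [e1, e2, div_eq_mul_inv]
    have h2 : h n x ^ 2 ≤ (Real.sqrt (8 : ℝ)⁻¹ ^ n * (Real.sqrt (m x))⁻¹) ^ 2 := by
      rw [h3, le_div_iff₀ (hm_pos x)]
      exact h1
    exact (pow_le_pow_iff_left₀ (hh_nonneg n x) (by positivity) two_ne_zero).mp h2
  have hh_summ_n : ∀ x, Summable (fun n => h n x) := by
    intro x
    apply Summable.of_nonneg_of_le (fun n => hh_nonneg n x) (fun n => hh_pt n x)
    apply Summable.mul_right
    apply summable_geometric_of_lt_one (Real.sqrt_nonneg _)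
    rw [show (1:ℝ) = Real.sqrt 1 by simp]
    exact Real.sqrt_lt_sqrt (by norm_num) (by norm_num)
  set g : X → ℝ := fun x => ∑' n, h n x with hg
  have hg_nonneg : ∀ x, 0 ≤ g x := fun x => tsum_nonneg (fun n => hh_nonneg n x)
  have hbig' : ∀ n : ℕ, ((n : ℝ) + 1) ^ 2 * 8 ^ n * N n < f n (xx n) ^ 2 := hbig
  -- geometric constant
  have hgeo_sum : Summable (fun n : ℕ => (4 : ℝ)⁻¹ ^ n) :=
    summable_geometric_of_lt_one (by norm_num) (by norm_num)
  set K : ℝ≥0∞ := ∑' n : ℕ, (2 : ℝ≥0∞) ^ n * ENNReal.ofReal ((8 : ℝ)⁻¹ ^ n) with hK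
  have hKeq : ∀ n : ℕ, (2 : ℝ≥0∞) ^ n * ENNReal.ofReal ((8 : ℝ)⁻¹ ^ n)
      = ENNReal.ofReal ((4 : ℝ)⁻¹ ^ n) := by
    intro n
    rw [show ((2 : ℝ≥0∞)) = ENNReal.ofReal (2 : ℝ) by simp,
      ← ENNReal.ofReal_pow (by norm_num), ← ENNReal.ofReal_mul (by positivity), ← mul_pow]
    norm_num
  have hK_ne_top : K ≠ ⊤ := by
    rw [hK, tsum_congr hKeq, ← ENNReal.ofReal_tsum_of_nonneg (fun n => by positivity) hgeo_sum]
    exact ENNReal.ofReal_ne_top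
  have keyCS : ∀ x, ENNReal.ofReal (g x ^ 2) ≤ 2 * ∑' n, 2 ^ n * ENNReal.ofReal (h n x ^ 2) :=
    fun x => real_sq_tsum_le _ (fun n => hh_nonneg n x) (hh_summ_n x)
  -- ℓ² bound
  have hinner_l2 : ∀ n : ℕ, ∑' x, ENNReal.ofReal (h n x ^ 2 * m x)
      ≤ ENNReal.ofReal ((8 : ℝ)⁻¹ ^ n) := by
    intro n
    rw [← ENNReal.ofReal_tsum_of_nonneg
      (fun x => mul_nonneg (sq_nonneg _) (hm_pos x).le) (hh_summable n)]
    exact ENNReal.ofReal_le_ofReal (hh_tsum_le n)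
  have hl2 : ∑' x, ENNReal.ofReal (g x ^ 2 * m x) ≤ 2 * K := by
    have hb1 := swap2 (fun x => ENNReal.ofReal (g x ^ 2 * m x))
      (fun n x => ENNReal.ofReal (h n x ^ 2 * m x)) (fun n => 2 ^ n) ?_
    · refine hb1.trans ?_
      rw [hK]
      exact mul_le_mul_right
        (ENNReal.tsum_le_tsum fun n => mul_le_mul_right (hinner_l2 n) _) _
    · intro x
      calc ENNReal.ofReal (g x ^ 2 * m x)
          = ENNReal.ofReal (g x ^ 2) * ENNReal.ofReal (m x) := ENNReal.ofReal_mul (sq_nonneg _)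
        _ ≤ (2 * ∑' n, 2 ^ n * ENNReal.ofReal (h n x ^ 2)) * ENNReal.ofReal (m x) :=
            mul_le_mul_left (keyCS x) _
        _ = 2 * ∑' n, 2 ^ n * ENNReal.ofReal (h n x ^ 2 * m x) := by
            rw [mul_assoc]
            congr 1
            rw [← ENNReal.tsum_mul_right]
            refine tsum_congr fun n => ?_
            rw [ENNReal.ofReal_mul (sq_nonneg (h n x)), mul_assoc]
  have h2K_ne_top : (2 : ℝ≥0∞) * K ≠ ⊤ := ENNReal.mul_ne_top (by norm_num) hK_ne_top
  have hg_sum : Summable (fun x => g x ^ 2 * m x) := by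
    have hne : ∑' x, ENNReal.ofReal (g x ^ 2 * m x) ≠ ⊤ :=
      (lt_of_le_of_lt hl2 h2K_ne_top.lt_top).ne
    exact (ENNReal.summable_toReal hne).congr
      (fun x => ENNReal.toReal_ofReal (mul_nonneg (sq_nonneg _) (hm_pos x).le))
  -- Qt f n bound on the c-part of f n
  have hQc : ∀ n : ℕ, ∑' x, ENNReal.ofReal (c x * f n x ^ 2) ≤ Qt (f n) := by
    intro n; rw [hQt (f n)]; exact le_add_self
  have hQb : ∀ n : ℕ, ∑' x, ∑' y, ENNReal.ofReal (b x y * (f n x - f n y) ^ 2)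
      ≤ 2 * Qt (f n) := by
    intro n
    have h21 : (2 : ℝ≥0∞) * (1 / 2) = 1 := by
      rw [one_div, ENNReal.mul_inv_cancel two_ne_zero ENNReal.ofNat_ne_top]
    calc ∑' x, ∑' y, ENNReal.ofReal (b x y * (f n x - f n y) ^ 2)
        = 2 * ((1 / 2 : ℝ≥0∞) * ∑' x, ∑' y, ENNReal.ofReal (b x y * (f n x - f n y) ^ 2)) := by
          rw [← mul_assoc, h21, one_mul]
      _ ≤ 2 * Qt (f n) := mul_le_mul_right (by rw [hQt (f n)]; exact le_self_add) _
  -- c-part of g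
  have hcpart : ∑' x, ENNReal.ofReal (c x * g x ^ 2) ≤ 2 * K := by
    have hinner : ∀ n : ℕ, ∑' x, ENNReal.ofReal (c x * h n x ^ 2)
        ≤ ENNReal.ofReal ((8 : ℝ)⁻¹ ^ n) := by
      intro n
      have e1 : ∀ x, c x * h n x ^ 2 = s n * (c x * f n x ^ 2) := by
        intro x; rw [hh_sq]; ring
      calc ∑' x, ENNReal.ofReal (c x * h n x ^ 2)
          = ENNReal.ofReal (s n) * ∑' x, ENNReal.ofReal (c x * f n x ^ 2) := by
            rw [← ENNReal.tsum_mul_left]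
            exact tsum_congr fun x => by
              rw [e1 x, ENNReal.ofReal_mul (hspos n).le]
        _ ≤ ENNReal.ofReal (s n) * ENNReal.ofReal (N n) :=
            mul_le_mul_right ((hQc n).trans (hQle n)) _
        _ = ENNReal.ofReal ((8 : ℝ)⁻¹ ^ n) := by
            rw [← ENNReal.ofReal_mul (hspos n).le, hsN n]
    have hb1 := swap2 (fun x => ENNReal.ofReal (c x * g x ^ 2))
      (fun n x => ENNReal.ofReal (c x * h n x ^ 2)) (fun n => 2 ^ n) ?_
    · refine hb1.trans ?_
      rw [hK]
      exact mul_le_mul_right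
        (ENNReal.tsum_le_tsum fun n => mul_le_mul_right (hinner n) _) _
    · intro x
      calc ENNReal.ofReal (c x * g x ^ 2)
          = ENNReal.ofReal (c x) * ENNReal.ofReal (g x ^ 2) := ENNReal.ofReal_mul (hc x)
        _ ≤ ENNReal.ofReal (c x) * (2 * ∑' n, 2 ^ n * ENNReal.ofReal (h n x ^ 2)) :=
            mul_le_mul_right (keyCS x) _
        _ = 2 * ∑' n, 2 ^ n * ENNReal.ofReal (c x * h n x ^ 2) := by
            rw [mul_left_comm]
            congr 1
            rw [← ENNReal.tsum_mul_left]
            refine tsum_congr fun n => ?_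
            rw [ENNReal.ofReal_mul (hc x), mul_left_comm]
  -- b-part of g
  have hbpart : ∑' x, ∑' y, ENNReal.ofReal (b x y * (g x - g y) ^ 2) ≤ 2 * (2 * K) := by
    have hptd : ∀ (n : ℕ) (x y : X), (h n x - h n y) ^ 2 ≤ s n * (f n x - f n y) ^ 2 := by
      intro n x y
      have e1 : h n x - h n y = Real.sqrt (s n) * (|f n x| - |f n y|) := by
        rw [hh]; ring
      have e2 : (|f n x| - |f n y|) ^ 2 ≤ (f n x - f n y) ^ 2 := by
        have h1 : |(|f n x| - |f n y|)| ≤ |f n x - f n y| := abs_abs_sub_abs_le_abs_sub _ _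
        calc (|f n x| - |f n y|) ^ 2 = |(|f n x| - |f n y|)| ^ 2 := (sq_abs _).symm
          _ ≤ |f n x - f n y| ^ 2 := pow_le_pow_left₀ (abs_nonneg _) h1 2
          _ = (f n x - f n y) ^ 2 := sq_abs _
      calc (h n x - h n y) ^ 2 = s n * (|f n x| - |f n y|) ^ 2 := by
            rw [e1, mul_pow, Real.sq_sqrt (hspos n).le]
        _ ≤ s n * (f n x - f n y) ^ 2 := mul_le_mul_of_nonneg_left e2 (hspos n).le
    have hptg : ∀ x y : X, ENNReal.ofReal ((g x - g y) ^ 2)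
        ≤ 2 * ∑' n, 2 ^ n * (ENNReal.ofReal (s n) * ENNReal.ofReal ((f n x - f n y) ^ 2)) := by
      intro x y
      have hd_sum : Summable (fun n => |h n x - h n y|) := by
        apply Summable.of_nonneg_of_le (fun n => abs_nonneg _) (fun n => ?_)
          ((hh_summ_n x).add (hh_summ_n y))
        rw [abs_sub_le_iff]
        constructor <;> nlinarith [hh_nonneg n x, hh_nonneg n y]
      have habs : |g x - g y| ≤ ∑' n, |h n x - h n y| := by
        have e3 : g x - g y = ∑' n, (h n x - h n y) :=
          (Summable.tsum_sub (hh_summ_n x) (hh_summ_n y)).symm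
        calc |g x - g y| = ‖∑' n, (h n x - h n y)‖ := by rw [← e3, Real.norm_eq_abs]
          _ ≤ ∑' n, ‖h n x - h n y‖ := norm_tsum_le_tsum_norm (by simpa [Real.norm_eq_abs] using hd_sum)
          _ = ∑' n, |h n x - h n y| := by simp [Real.norm_eq_abs]
      have hsq2 : (g x - g y) ^ 2 ≤ (∑' n, |h n x - h n y|) ^ 2 := by
        calc (g x - g y) ^ 2 = |g x - g y| ^ 2 := (sq_abs _).symm
          _ ≤ (∑' n, |h n x - h n y|) ^ 2 := pow_le_pow_left₀ (abs_nonneg _) habs 2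
      calc ENNReal.ofReal ((g x - g y) ^ 2)
          ≤ ENNReal.ofReal ((∑' n, |h n x - h n y|) ^ 2) := ENNReal.ofReal_le_ofReal hsq2
        _ ≤ 2 * ∑' n, 2 ^ n * ENNReal.ofReal (|h n x - h n y| ^ 2) :=
            real_sq_tsum_le _ (fun n => abs_nonneg _) hd_sum
        _ ≤ 2 * ∑' n, 2 ^ n * (ENNReal.ofReal (s n) * ENNReal.ofReal ((f n x - f n y) ^ 2)) := by
            refine mul_le_mul_right (ENNReal.tsum_le_tsum fun n => mul_le_mul_right ?_ _) _
            rw [sq_abs, ← ENNReal.ofReal_mul (hspos n).le]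
            exact ENNReal.ofReal_le_ofReal (hptd n x y)
    have hb1 := swap3 (fun x y => ENNReal.ofReal (b x y * (g x - g y) ^ 2))
      (fun n x y => ENNReal.ofReal (b x y * (f n x - f n y) ^ 2))
      (fun n => 2 ^ n * ENNReal.ofReal (s n)) ?_
    · refine hb1.trans ?_
      have hterm : ∀ n : ℕ,
          (2 ^ n * ENNReal.ofReal (s n)) *
            (∑' x, ∑' y, ENNReal.ofReal (b x y * (f n x - f n y) ^ 2))
          ≤ 2 * ((2 : ℝ≥0∞) ^ n * ENNReal.ofReal ((8 : ℝ)⁻¹ ^ n)) := by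
        intro n
        calc (2 ^ n * ENNReal.ofReal (s n)) *
              (∑' x, ∑' y, ENNReal.ofReal (b x y * (f n x - f n y) ^ 2))
            ≤ (2 ^ n * ENNReal.ofReal (s n)) * (2 * ENNReal.ofReal (N n)) :=
              mul_le_mul_right ((hQb n).trans (mul_le_mul_right (hQle n) _)) _
          _ = 2 * ((2 : ℝ≥0∞) ^ n * (ENNReal.ofReal (s n) * ENNReal.ofReal (N n))) := by ring
          _ = 2 * ((2 : ℝ≥0∞) ^ n * ENNReal.ofReal ((8 : ℝ)⁻¹ ^ n)) := by
              rw [← ENNReal.ofReal_mul (hspos n).le, hsN n]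
      calc 2 * ∑' n, (2 ^ n * ENNReal.ofReal (s n)) *
              (∑' x, ∑' y, ENNReal.ofReal (b x y * (f n x - f n y) ^ 2))
          ≤ 2 * ∑' n, 2 * ((2 : ℝ≥0∞) ^ n * ENNReal.ofReal ((8 : ℝ)⁻¹ ^ n)) :=
            mul_le_mul_right (ENNReal.tsum_le_tsum hterm) _
        _ = 2 * (2 * K) := by rw [ENNReal.tsum_mul_left, hK]
    · intro x y
      calc ENNReal.ofReal (b x y * (g x - g y) ^ 2)
          = ENNReal.ofReal (b x y) * ENNReal.ofReal ((g x - g y) ^ 2) :=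
            ENNReal.ofReal_mul (hb_nonneg x y)
        _ ≤ ENNReal.ofReal (b x y) *
              (2 * ∑' n, 2 ^ n * (ENNReal.ofReal (s n) * ENNReal.ofReal ((f n x - f n y) ^ 2))) :=
            mul_le_mul_right (hptg x y) _
        _ = 2 * ∑' n, (2 ^ n * ENNReal.ofReal (s n)) *
              ENNReal.ofReal (b x y * (f n x - f n y) ^ 2) := by
            rw [mul_left_comm]
            congr 1
            rw [← ENNReal.tsum_mul_left]
            refine tsum_congr fun n => ?_
            rw [ENNReal.ofReal_mul (hb_nonneg x y)]
            ring
  -- Qt g is finite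
  have hQtg : Qt g < ⊤ := by
    rw [hQt g]
    have h1 : (1 / 2 : ℝ≥0∞) * (∑' x, ∑' y, ENNReal.ofReal (b x y * (g x - g y) ^ 2)) < ⊤ := by
      refine ENNReal.mul_lt_top (by norm_num) ?_
      exact lt_of_le_of_lt hbpart
        (ENNReal.mul_ne_top (by norm_num) h2K_ne_top).lt_top
    have h2 : (∑' x, ENNReal.ofReal (c x * g x ^ 2)) < ⊤ :=
      lt_of_le_of_lt hcpart h2K_ne_top.lt_top
    exact ENNReal.add_lt_top.mpr ⟨h1, h2⟩
  -- conclude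
  obtain ⟨B, hB⟩ := hbounded g hg_sum hQtg
  set n := ⌈B⌉₊ with hn
  have hgB : g (xx n) ≤ B := (le_abs_self _).trans (hB (xx n))
  have hs1 : s n * ((8 : ℝ) ^ n * N n) = 1 :=
    inv_mul_cancel₀ (mul_pos (by positivity) (hNpos n)).ne'
  have key := mul_lt_mul_of_pos_left (hbig' n) (hspos n)
  rw [← hh_sq n (xx n)] at key
  have e4 : s n * (((n : ℝ) + 1) ^ 2 * 8 ^ n * N n)
      = ((n : ℝ) + 1) ^ 2 * (s n * ((8 : ℝ) ^ n * N n)) := by ring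
  rw [e4, hs1, mul_one] at key
  have h2 : (n : ℝ) + 1 ≤ h n (xx n) := by nlinarith [hh_nonneg n (xx n)]
  have h3 : h n (xx n) ≤ g (xx n) := Summable.le_tsum (hh_summ_n (xx n)) n (fun k _ => hh_nonneg k _)
  have h4 : B ≤ (n : ℝ) := Nat.le_ceil B
  linarith
end
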